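/- arXiv:2003.03280 — 3 statements merged into one kernel-verified Lean document; each statement's English description precedes it below -/
import Mathlib

section
/- Let W be an ℝ^k-valued random vector with E‖W‖^{2+δ} < ∞ for some δ ∈ [0,1], and let W' be a centered Gaussian vector with the same covariance matrix as W (and W centered). Then E‖W'‖^{2+δ} ≤ 3^{1/2 + δ/4} E‖W‖^{2+δ}. -/
open MeasureTheory ProbabilityTheory Filter
open scoped ProbabilityTheory ENNReal

section Helpers


lemma key_ineq (a : ℝ) (ha : 0 ≤ a) :
    6 - 8 * Real.exp (-a) + 2 * Real.exp (-(4*a)) ≤ 12 * a^2 := by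
  set x := Real.exp (-a) with hx
  have hx0 : 0 < x := Real.exp_pos _
  have hx1 : x ≤ 1 := Real.exp_le_one_iff.2 (by linarith)
  have hxa : 1 - a ≤ x := by have := Real.add_one_le_exp (-a); linarith
  have h4 : Real.exp (-(4*a)) = x^4 := by
    rw [hx, ← Real.exp_nat_mul]; norm_num
  rw [h4]
  have h1 : (1-x)^2 ≤ a^2 := by nlinarith
  have h2 : x^2 + 2*x + 3 ≤ 6 := by nlinarith
  have h3 : (0:ℝ) ≤ x^2 + 2*x + 3 := by nlinarith
  have key : (1-x)^2 * (x^2+2*x+3) ≤ a^2 * 6 := mul_le_mul h1 h2 h3 (sq_nonneg a)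
  nlinarith [key]


lemma sin_div_tendsto : Tendsto (fun t : ℝ => Real.sin t / t) (nhdsWithin 0 {0}ᶜ) (nhds 1) := by
  have h := Real.hasDerivAt_sin 0
  rw [hasDerivAt_iff_tendsto_slope] at h
  simp only [Real.cos_zero] at h
  have : (slope Real.sin 0) = fun t : ℝ => Real.sin t / t := by
    funext t; simp [slope_def_field]
  rwa [this] at h

lemma tendsto_g {s : ℕ → ℝ} (hs : Tendsto s atTop (nhds 0)) (hsne : ∀ n, s n ≠ 0) (x : ℝ) :
    Tendsto (fun n => (2 - 2 * Real.cos (s n * x))^2 / (s n)^4) atTop (nhds (x^4)) := by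
  have hrw : ∀ n, (2 - 2 * Real.cos (s n * x))^2 / (s n)^4
      = (2 * Real.sin (s n * x / 2) / s n)^4 := by
    intro n
    have h1 : Real.sin (s n * x / 2)^2 = 1/2 - Real.cos (s n * x)/2 := by
      rw [Real.sin_sq_eq_half_sub, show 2 * (s n * x / 2) = s n * x by ring]
    rw [div_pow]
    congr 1
    nlinarith [h1]
  simp_rw [hrw]
  have hbase : Tendsto (fun n => 2 * Real.sin (s n * x / 2) / s n) atTop (nhds x) := by
    by_cases hx : x = 0
    · simpa [hx] using tendsto_const_nhds (x := (0:ℝ)) (f := atTop (α := ℕ))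
    · set y : ℕ → ℝ := fun n => s n * x / 2 with hy
      have hy0 : Tendsto y atTop (nhds 0) := by
        have := hs.mul_const (x/2)
        simpa [hy, mul_div_assoc] using this
      have hyne : ∀ n, y n ≠ 0 := fun n =>
        div_ne_zero (mul_ne_zero (hsne n) hx) two_ne_zero
      have hy' : Tendsto y atTop (nhdsWithin 0 {0}ᶜ) :=
        tendsto_nhdsWithin_of_tendsto_nhds_of_eventually_within _ hy0
          (Eventually.of_forall fun n => hyne n)
      have hcomp := sin_div_tendsto.comp hy'
      have h2 := hcomp.const_mul x
      rw [mul_one] at h2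
      refine h2.congr fun n => ?_
      show x * (Real.sin (y n) / y n) = 2 * Real.sin (s n * x / 2) / s n
      have hyn : y n = s n * x / 2 := rfl
      rw [hyn]
      rw [show x * (Real.sin (s n * x / 2) / (s n * x / 2))
          = (2 * Real.sin (s n * x / 2)) * x / (s n * x) by ring,
        mul_div_mul_right _ _ hx]
  have := hbase.pow 4
  simpa using this


lemma re_char {Ω : Type*} [MeasureSpace Ω] [IsProbabilityMeasure (ℙ : Measure Ω)]
    (Y : Ω → ℝ) (hY : AEMeasurable Y) (c : ℝ)
    (h : ∫ ω, Complex.exp (Complex.I * ((Y ω : ℝ) : ℂ)) = (Real.exp c : ℂ)) :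
    ∫ ω, Real.cos (Y ω) = Real.exp c := by
  have hmeas : AEStronglyMeasurable (fun ω => Complex.exp (Complex.I * ((Y ω : ℝ) : ℂ))) ℙ := by
    have : Measurable (fun r : ℝ => Complex.exp (Complex.I * (r : ℂ))) :=
      (Complex.continuous_exp.comp (continuous_const.mul Complex.continuous_ofReal)).measurable
    exact (this.comp_aemeasurable hY).aestronglyMeasurable
  have hint : Integrable (fun ω => Complex.exp (Complex.I * ((Y ω : ℝ) : ℂ))) := by
    refine Integrable.mono' (integrable_const 1) hmeas ?_
    filter_upwards with ω
    rw [Complex.norm_exp]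
    simp
  have h2 := integral_re hint
  simp only [RCLike.re_to_complex] at h2
  rw [h, Complex.ofReal_re] at h2
  rw [← h2]
  congr 1
  funext ω
  rw [mul_comm, Complex.exp_ofReal_mul_I_re]

lemma fourth_moment_le {Ω : Type*} [MeasureSpace Ω] [IsProbabilityMeasure (ℙ : Measure Ω)]
    (X : Ω → ℝ) (hX : AEMeasurable X) (v : ℝ) (hv : 0 ≤ v)
    (hc : ∀ s : ℝ, ∫ ω, Real.cos (s * X ω) = Real.exp (-(1/2) * (s^2 * v))) :
    ∫⁻ ω, ENNReal.ofReal ((X ω)^4) ≤ ENNReal.ofReal (3 * v^2) := by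
  set s : ℕ → ℝ := fun n => 1/(n+1) with hsdef
  have hspos : ∀ n, 0 < s n := fun n => by positivity
  have hsne : ∀ n, s n ≠ 0 := fun n => (hspos n).ne'
  have hs0 : Tendsto s atTop (nhds 0) := tendsto_one_div_add_atTop_nhds_zero_nat
  have hcosm : ∀ c : ℝ, AEMeasurable (fun ω => Real.cos (c * X ω)) := fun c =>
    Real.continuous_cos.measurable.comp_aemeasurable (hX.const_mul c)
  have hcosint : ∀ c : ℝ, Integrable (fun ω => Real.cos (c * X ω)) := fun c => by
    refine Integrable.mono' (integrable_const 1) (hcosm c).aestronglyMeasurable ?_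
    filter_upwards with ω
    rw [Real.norm_eq_abs]
    exact Real.abs_cos_le_one _
  set g : ℕ → Ω → ℝ := fun n ω => (2 - 2 * Real.cos (s n * X ω))^2 / (s n)^4 with hgdef
  have hgnn : ∀ n ω, 0 ≤ g n ω := fun n ω => div_nonneg (sq_nonneg _) (by positivity)
  have hgrw : ∀ n, g n = fun ω =>
      (6 - 8 * Real.cos (s n * X ω) + 2 * Real.cos (2 * s n * X ω)) / (s n)^4 := by
    intro n
    funext ω
    rw [hgdef]
    dsimp only
    congr 1
    rw [show 2 * s n * X ω = 2 * (s n * X ω) by ring, Real.cos_two_mul]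
    ring
  have hgm : ∀ n, AEMeasurable (g n) := fun n => by
    rw [hgdef]
    exact ((aemeasurable_const.sub ((hcosm (s n)).const_mul 2)).pow_const 2).div_const _
  have hgint : ∀ n, Integrable (g n) := fun n => by
    rw [hgrw n]
    refine Integrable.div_const ?_ _
    exact ((integrable_const 6).sub ((hcosint (s n)).const_mul 8)).add
      ((hcosint (2 * s n)).const_mul 2)
  have hgval : ∀ n, ∫ ω, g n ω = (6 - 8 * Real.exp (-(1/2) * ((s n)^2 * v))
      + 2 * Real.exp (-(1/2) * ((2 * s n)^2 * v))) / (s n)^4 := by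
    intro n
    rw [hgrw n]
    simp_rw [div_eq_mul_inv]
    rw [integral_mul_const]
    congr 1
    have h1 : Integrable (fun ω => (6:ℝ) - 8 * Real.cos (s n * X ω)) := by
      exact (integrable_const 6).sub ((hcosint (s n)).const_mul 8)
    have h2 : Integrable (fun ω => (2:ℝ) * Real.cos (2 * s n * X ω)) := by
      exact (hcosint (2 * s n)).const_mul 2
    have h3 : Integrable (fun _ : Ω => (6:ℝ)) := integrable_const 6
    have h4 : Integrable (fun ω => (8:ℝ) * Real.cos (s n * X ω)) := by
      exact (hcosint (s n)).const_mul 8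
    rw [integral_add h1 h2, integral_sub h3 h4,
      integral_const_mul, integral_const_mul, integral_const, hc, hc]
    simp
  have hgbound : ∀ n, ∫ ω, g n ω ≤ 3 * v^2 := by
    intro n
    rw [hgval n]
    set a := v * (s n)^2 / 2 with ha
    have ha0 : 0 ≤ a := by positivity
    have e1 : -(1/2) * ((s n)^2 * v) = -a := by rw [ha]; ring
    have e2 : -(1/2) * ((2 * s n)^2 * v) = -(4*a) := by rw [ha]; ring
    rw [e1, e2, div_le_iff₀ (by positivity : (0:ℝ) < (s n)^4)]
    refine (key_ineq a ha0).trans_eq ?_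
    rw [ha]; ring
  have hptw : ∀ ω, Tendsto (fun n => ENNReal.ofReal (g n ω)) atTop
      (nhds (ENNReal.ofReal ((X ω)^4))) := fun ω =>
    (ENNReal.continuous_ofReal.tendsto _).comp (tendsto_g hs0 hsne (X ω))
  calc ∫⁻ ω, ENNReal.ofReal ((X ω)^4)
      = ∫⁻ ω, liminf (fun n => ENNReal.ofReal (g n ω)) atTop :=
        lintegral_congr fun ω => ((hptw ω).liminf_eq).symm
    _ ≤ liminf (fun n => ∫⁻ ω, ENNReal.ofReal (g n ω)) atTop :=
        lintegral_liminf_le' (fun n => (hgm n).ennreal_ofReal)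
    _ ≤ ENNReal.ofReal (3 * v^2) := by
        have hb : ∀ n, ∫⁻ ω, ENNReal.ofReal (g n ω) ≤ ENNReal.ofReal (3 * v^2) := fun n => by
          rw [← ofReal_integral_eq_lintegral_ofReal (hgint n)
            (Eventually.of_forall (hgnn n))]
          exact ENNReal.ofReal_le_ofReal (hgbound n)
        calc liminf (fun n => ∫⁻ ω, ENNReal.ofReal (g n ω)) atTop
            ≤ liminf (fun _ => ENNReal.ofReal (3 * v^2)) atTop :=
              liminf_le_liminf (Eventually.of_forall hb)
          _ = ENNReal.ofReal (3 * v^2) := liminf_const _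

lemma lintegral_le_rpow {α : Type*} [MeasurableSpace α] (μ : Measure α) [IsProbabilityMeasure μ]
    {f : α → ℝ≥0∞} (hf : AEMeasurable f μ) {p : ℝ} (hp : 1 < p) :
    ∫⁻ a, f a ∂μ ≤ (∫⁻ a, f a ^ p ∂μ) ^ (1/p) := by
  have hp0 : (0:ℝ) < p := lt_trans one_pos hp
  have hp1 : p - 1 ≠ 0 := by intro h; rw [sub_eq_zero] at h; exact hp.ne' h
  have hq : p.HolderConjugate (p/(p-1)) := Real.HolderConjugate.conjExponent hp
  have h := ENNReal.lintegral_mul_le_Lp_mul_Lq μ hq hf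
    (aemeasurable_const (b := (1:ℝ≥0∞)))
  simpa using h

end Helpers

/-- If `W` is centered with `E‖W‖^{2+δ} < ∞` for some `δ ∈ [0,1]` and `W'` is a centered
Gaussian vector with the same covariance as `W`, then
`E‖W'‖^{2+δ} ≤ 3^{1/2+δ/4} E‖W‖^{2+δ}`. -/
theorem gaussian_moment_comparison {k : ℕ} {Ω : Type*} [MeasureSpace Ω]
    [IsProbabilityMeasure (ℙ : Measure Ω)]
    (δ : ℝ) (hδ : δ ∈ Set.Icc (0 : ℝ) 1)
    (W W' : Ω → EuclideanSpace ℝ (Fin k))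
    (hWm : AEMeasurable W) (hW'm : AEMeasurable W')
    (hWcent : ∫ ω, W ω = 0)
    (hWint : Integrable (fun ω => ‖W ω‖ ^ (2 + δ)))
    (hGauss : ∀ t : EuclideanSpace ℝ (Fin k),
      ∫ ω, Complex.exp (Complex.I * ((inner ℝ t (W' ω) : ℝ) : ℂ)) =
        (Real.exp (-(1 / 2) * ∫ ω, ((inner ℝ t (W ω) : ℝ)) ^ 2) : ℂ)) :
    ∫ ω, ‖W' ω‖ ^ (2 + δ) ≤ (3 : ℝ) ^ ((1 : ℝ) / 2 + δ / 4) * ∫ ω, ‖W ω‖ ^ (2 + δ) := by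
  obtain ⟨hδ0, hδ1⟩ := hδ
  have hδp : (0:ℝ) < 2 + δ := by linarith
  -- coordinates are AEMeasurable
  have hW'c : ∀ i : Fin k, AEMeasurable (fun ω => W' ω i) := fun i =>
    ((measurable_pi_apply i).comp
      (MeasurableEquiv.toLp 2 (Fin k → ℝ)).symm.measurable).comp_aemeasurable hW'm
  have hWc : ∀ i : Fin k, AEMeasurable (fun ω => W ω i) := fun i =>
    ((measurable_pi_apply i).comp
      (MeasurableEquiv.toLp 2 (Fin k → ℝ)).symm.measurable).comp_aemeasurable hWm
  -- norm squared as sum of squares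
  have hnormsq : ∀ x : EuclideanSpace ℝ (Fin k), ‖x‖^2 = ∑ i, (x i)^2 := by
    intro x
    rw [EuclideanSpace.norm_eq, Real.sq_sqrt (by positivity)]
    simp [sq_abs]
  -- integrability of ‖W‖^2
  have hW2 : Integrable (fun ω => ‖W ω‖^2) := by
    refine Integrable.mono' ((integrable_const 1).add hWint)
      ((hWm.norm.pow_const 2).aestronglyMeasurable) ?_
    filter_upwards with ω
    rw [Real.norm_eq_abs, abs_of_nonneg (by positivity)]
    rcases le_total (‖W ω‖) 1 with h | h
    · have h1 : ‖W ω‖^2 ≤ 1 := pow_le_one₀ (norm_nonneg _) h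
      have h2 : (0:ℝ) ≤ ‖W ω‖ ^ (2+δ) := Real.rpow_nonneg (norm_nonneg _) _
      simp only [Pi.add_apply]
      linarith
    · have h2 : ‖W ω‖^((2:ℕ):ℝ) ≤ ‖W ω‖^(2+δ) :=
        Real.rpow_le_rpow_of_exponent_le h (by push_cast; linarith)
      rw [Real.rpow_natCast] at h2
      simp only [Pi.add_apply]
      have h3 : (0:ℝ) ≤ 1 := zero_le_one
      linarith
  -- coordinate squares integrable
  have hWiInt : ∀ i, Integrable (fun ω => (W ω i)^2) := by
    intro i
    refine Integrable.mono' hW2 ((hWc i).pow_const 2).aestronglyMeasurable ?_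
    filter_upwards with ω
    rw [Real.norm_eq_abs, abs_of_nonneg (sq_nonneg _), hnormsq]
    exact Finset.single_le_sum (f := fun j => (W ω j)^2) (fun j _ => sq_nonneg _)
      (Finset.mem_univ i)
  set v : Fin k → ℝ := fun i => ∫ ω, (W ω i)^2 with hvdef
  have hvnn : ∀ i, 0 ≤ v i := fun i => integral_nonneg fun ω => sq_nonneg _
  have hT : ∑ i, v i = ∫ ω, ‖W ω‖^2 := by
    rw [hvdef, ← integral_finset_sum _ (fun i _ => hWiInt i)]
    exact integral_congr_ae (Eventually.of_forall fun ω => (hnormsq (W ω)).symm)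
  -- characteristic function per coordinate
  have hchar : ∀ (i : Fin k) (s : ℝ),
      ∫ ω, Real.cos (s * W' ω i) = Real.exp (-(1/2) * (s^2 * v i)) := by
    intro i s
    have ht := hGauss (EuclideanSpace.single i s)
    have hL : ∀ (y : EuclideanSpace ℝ (Fin k)),
        (inner ℝ (EuclideanSpace.single i s) y : ℝ) = s * y i := fun y => by
      rw [EuclideanSpace.inner_single_left]; simp
    simp only [hL] at ht
    have hR : ∫ ω, (s * W ω i)^2 = s^2 * v i := by
      simp_rw [mul_pow]
      rw [integral_const_mul]
    rw [hR] at ht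
    exact re_char (fun ω => s * W' ω i) ((hW'c i).const_mul s) _ ht
  -- fourth moments of coordinates
  have hM4 : ∀ i, ∫⁻ ω, ENNReal.ofReal ((W' ω i)^4) ≤ ENNReal.ofReal (3 * (v i)^2) :=
    fun i => fourth_moment_le _ (hW'c i) (v i) (hvnn i) (hchar i)
  set b : Fin k → ℝ≥0∞ := fun i => ENNReal.ofReal (Real.sqrt 3 * v i) with hbdef
  have hb2 : ∀ i, ENNReal.ofReal (3 * (v i)^2) = b i ^ 2 := fun i => by
    rw [hbdef]
    rw [← ENNReal.ofReal_pow (by positivity), mul_pow, Real.sq_sqrt (by norm_num : (0:ℝ) ≤ 3)]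
  -- Cauchy-Schwarz for pairs of coordinates
  have hsqrt : ∀ i : Fin k,
      (∫⁻ ω, ENNReal.ofReal ((W' ω i)^2) ^ (2:ℝ)) ^ ((1:ℝ)/2) ≤ b i := by
    intro i
    have e : ∀ ω : Ω, ENNReal.ofReal ((W' ω i)^2) ^ (2:ℝ) = ENNReal.ofReal ((W' ω i)^4) := by
      intro ω
      rw [show (2:ℝ) = ((2:ℕ):ℝ) by norm_num, ENNReal.rpow_natCast,
        ← ENNReal.ofReal_pow (sq_nonneg _)]
      norm_num [← pow_mul]
    simp_rw [e]
    calc (∫⁻ ω, ENNReal.ofReal ((W' ω i)^4)) ^ ((1:ℝ)/2)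
        ≤ (b i ^ 2) ^ ((1:ℝ)/2) := by
          refine ENNReal.rpow_le_rpow ?_ (by norm_num)
          rw [← hb2 i]; exact hM4 i
      _ = b i := by
          rw [← ENNReal.rpow_natCast (b i) 2, ← ENNReal.rpow_mul]
          norm_num
  have hCS : ∀ i j, ∫⁻ ω, ENNReal.ofReal ((W' ω i)^2 * (W' ω j)^2) ≤ b i * b j := by
    intro i j
    have hf : AEMeasurable (fun ω => ENNReal.ofReal ((W' ω i)^2)) :=
      ((hW'c i).pow_const 2).ennreal_ofReal
    have hg : AEMeasurable (fun ω => ENNReal.ofReal ((W' ω j)^2)) :=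
      ((hW'c j).pow_const 2).ennreal_ofReal
    have hpq : (2:ℝ).HolderConjugate 2 := Real.HolderConjugate.two_two
    have h := ENNReal.lintegral_mul_le_Lp_mul_Lq ℙ hpq hf hg
    calc ∫⁻ ω, ENNReal.ofReal ((W' ω i)^2 * (W' ω j)^2)
        = ∫⁻ ω, ((fun ω => ENNReal.ofReal ((W' ω i)^2)) *
            (fun ω => ENNReal.ofReal ((W' ω j)^2))) ω := by
          refine lintegral_congr fun ω => ?_
          simp [ENNReal.ofReal_mul (sq_nonneg _)]
      _ ≤ _ := h
      _ ≤ b i * b j := mul_le_mul' (hsqrt i) (hsqrt j)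
  -- fourth moment of the norm
  have hM4' : ∫⁻ ω, ENNReal.ofReal (‖W' ω‖^4)
      ≤ (ENNReal.ofReal (Real.sqrt 3 * ∑ i, v i))^2 := by
    have hnorm4 : ∀ x : EuclideanSpace ℝ (Fin k),
        ‖x‖^4 = ∑ i, ∑ j, (x i)^2 * (x j)^2 := by
      intro x
      have h4 : ‖x‖^4 = (‖x‖^2) * (‖x‖^2) := by ring
      rw [h4, hnormsq, Finset.sum_mul_sum]
    have hEm : ∀ i j : Fin k,
        AEMeasurable (fun ω => ENNReal.ofReal ((W' ω i)^2 * (W' ω j)^2)) :=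
      fun i j => (((hW'c i).pow_const 2).mul ((hW'c j).pow_const 2)).ennreal_ofReal
    calc ∫⁻ ω, ENNReal.ofReal (‖W' ω‖^4)
        = ∫⁻ ω, ∑ i, ∑ j, ENNReal.ofReal ((W' ω i)^2 * (W' ω j)^2) := by
          refine lintegral_congr fun ω => ?_
          rw [hnorm4,
            ENNReal.ofReal_sum_of_nonneg (fun i _ => Finset.sum_nonneg
              (fun j _ => mul_nonneg (sq_nonneg _) (sq_nonneg _)))]
          refine Finset.sum_congr rfl fun i _ => ?_
          rw [ENNReal.ofReal_sum_of_nonneg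
            (fun j _ => mul_nonneg (sq_nonneg _) (sq_nonneg _))]
      _ = ∑ i, ∫⁻ ω, ∑ j, ENNReal.ofReal ((W' ω i)^2 * (W' ω j)^2) :=
          lintegral_finset_sum' _
            (fun i _ => Finset.aemeasurable_fun_sum _ (fun j _ => hEm i j))
      _ = ∑ i, ∑ j, ∫⁻ ω, ENNReal.ofReal ((W' ω i)^2 * (W' ω j)^2) :=
          Finset.sum_congr rfl fun i _ =>
            lintegral_finset_sum' _ (fun j _ => hEm i j)
      _ ≤ ∑ i, ∑ j, b i * b j :=
          Finset.sum_le_sum fun i _ => Finset.sum_le_sum fun j _ => hCS i j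
      _ = (∑ i, b i) * (∑ j, b j) := (Finset.sum_mul_sum _ _ _ _).symm
      _ = (ENNReal.ofReal (Real.sqrt 3 * ∑ i, v i))^2 := by
          have hbs : ∑ i, b i = ENNReal.ofReal (Real.sqrt 3 * ∑ i, v i) := by
            rw [Finset.mul_sum, ENNReal.ofReal_sum_of_nonneg
              (fun i _ => mul_nonneg (Real.sqrt_nonneg 3) (hvnn i))]
          rw [hbs, sq]
  -- abbreviations
  have hne : (2+δ) ≠ 0 := ne_of_gt hδp
  have hAm : AEMeasurable (fun ω => ENNReal.ofReal (‖W' ω‖^(2+δ))) :=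
    ((Real.continuous_rpow_const hδp.le).measurable.comp_aemeasurable
      hW'm.norm).ennreal_ofReal
  set A := ∫⁻ ω, ENNReal.ofReal (‖W' ω‖^(2+δ)) with hA
  set B := ∫⁻ ω, ENNReal.ofReal (‖W ω‖^(2+δ)) with hB
  set M2 := ∫⁻ ω, ENNReal.ofReal (‖W ω‖^2) with hM2
  have hTM2 : ENNReal.ofReal (∑ i, v i) = M2 := by
    rw [hT, hM2]
    exact ofReal_integral_eq_lintegral_ofReal hW2 (Eventually.of_forall fun ω => sq_nonneg _)
  have hsum_sq : (ENNReal.ofReal (Real.sqrt 3 * ∑ i, v i))^2 = ENNReal.ofReal 3 * M2^2 := by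
    rw [ENNReal.ofReal_mul (Real.sqrt_nonneg 3), mul_pow, ← hTM2,
      ← ENNReal.ofReal_pow (Real.sqrt_nonneg 3), Real.sq_sqrt (by norm_num : (0:ℝ) ≤ 3)]
  have hA4 : A ≤ (∫⁻ ω, ENNReal.ofReal (‖W' ω‖^4)) ^ (((2+δ)/4 : ℝ)) := by
    have hp : (1:ℝ) < 4/(2+δ) := by rw [lt_div_iff₀ hδp]; linarith
    have h := lintegral_le_rpow ℙ hAm hp
    have he : ∀ ω : Ω, ENNReal.ofReal (‖W' ω‖^(2+δ)) ^ ((4/(2+δ)) : ℝ)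
        = ENNReal.ofReal (‖W' ω‖^4) := by
      intro ω
      rw [ENNReal.ofReal_rpow_of_nonneg (Real.rpow_nonneg (norm_nonneg _) _)
        (le_of_lt (lt_trans one_pos hp))]
      congr 1
      rw [← Real.rpow_natCast ‖W' ω‖ 4, ← Real.rpow_mul (norm_nonneg _)]
      congr 1
      push_cast
      field_simp
    calc A ≤ (∫⁻ ω, ENNReal.ofReal (‖W' ω‖^(2+δ)) ^ ((4/(2+δ)):ℝ)) ^ ((1/(4/(2+δ))):ℝ) := h
      _ = (∫⁻ ω, ENNReal.ofReal (‖W' ω‖^4)) ^ (((2+δ)/4 : ℝ)) := by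
          rw [one_div_div]
          congr 1
          exact lintegral_congr he
  have hM2B : M2 ≤ B ^ ((2/(2+δ)) : ℝ) := by
    rcases eq_or_lt_of_le hδ0 with h0 | h0
    · have hMB : M2 = B := by
        refine lintegral_congr fun ω => ?_
        congr 1
        rw [← h0, show ((2:ℝ)+0) = ((2:ℕ):ℝ) by norm_num, Real.rpow_natCast]
      rw [hMB, ← h0]
      norm_num
    · have hp : (1:ℝ) < (2+δ)/2 := by rw [lt_div_iff₀ (by norm_num : (0:ℝ)<2)]; linarith
      have hm : AEMeasurable (fun ω => ENNReal.ofReal (‖W ω‖^2)) :=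
        (hWm.norm.pow_const 2).ennreal_ofReal
      have h := lintegral_le_rpow ℙ hm hp
      have he : ∀ ω : Ω, ENNReal.ofReal (‖W ω‖^2) ^ (((2+δ)/2):ℝ)
          = ENNReal.ofReal (‖W ω‖^(2+δ)) := by
        intro ω
        rw [ENNReal.ofReal_rpow_of_nonneg (sq_nonneg _)
          (le_of_lt (lt_trans one_pos hp))]
        congr 1
        rw [← Real.rpow_natCast ‖W ω‖ 2, ← Real.rpow_mul (norm_nonneg _)]
        congr 1
        push_cast
        field_simp
      calc M2 ≤ (∫⁻ ω, ENNReal.ofReal (‖W ω‖^2) ^ (((2+δ)/2):ℝ)) ^ ((1/((2+δ)/2)):ℝ) := h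
        _ = B ^ ((2/(2+δ)):ℝ) := by
            rw [one_div_div]
            congr 1
            exact lintegral_congr he
  have final : A ≤ ENNReal.ofReal 3 ^ (((2+δ)/4 : ℝ)) * B := by
    have hexp : (0:ℝ) ≤ (2+δ)/4 := div_nonneg hδp.le (by norm_num)
    calc A ≤ (∫⁻ ω, ENNReal.ofReal (‖W' ω‖^4)) ^ (((2+δ)/4 : ℝ)) := hA4
      _ ≤ ((ENNReal.ofReal (Real.sqrt 3 * ∑ i, v i))^2) ^ (((2+δ)/4 : ℝ)) :=
          ENNReal.rpow_le_rpow hM4' hexp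
      _ = (ENNReal.ofReal 3 * M2^2) ^ (((2+δ)/4 : ℝ)) := by rw [hsum_sq]
      _ ≤ (ENNReal.ofReal 3 * (B ^ ((2/(2+δ)) : ℝ))^2) ^ (((2+δ)/4 : ℝ)) := by
          refine ENNReal.rpow_le_rpow ?_ hexp
          exact mul_le_mul_right (pow_le_pow_left' hM2B 2) _
      _ = ENNReal.ofReal 3 ^ (((2+δ)/4 : ℝ)) * B := by
          rw [ENNReal.mul_rpow_of_nonneg _ _ hexp]
          congr 1
          rw [← ENNReal.rpow_natCast (B ^ ((2/(2+δ)):ℝ)) 2, ← ENNReal.rpow_mul,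
            ← ENNReal.rpow_mul]
          rw [show (2/(2+δ)) * (((2:ℕ):ℝ) * ((2+δ)/4)) = 1 by push_cast; field_simp; ring]
          exact ENNReal.rpow_one B
  have hAeq : ∫ ω, ‖W' ω‖^(2+δ) = A.toReal := by
    rw [hA]
    rw [integral_eq_lintegral_of_nonneg_ae
      (Eventually.of_forall fun ω => Real.rpow_nonneg (norm_nonneg _) _)
      (((Real.continuous_rpow_const hδp.le).measurable.comp_aemeasurable
        hW'm.norm).aestronglyMeasurable)]
  have hBeq : ∫ ω, ‖W ω‖^(2+δ) = B.toReal := by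
    rw [hB]
    rw [integral_eq_lintegral_of_nonneg_ae
      (Eventually.of_forall fun ω => Real.rpow_nonneg (norm_nonneg _) _)
      hWint.aestronglyMeasurable]
  have hBfin : B ≠ ⊤ := hWint.lintegral_lt_top.ne
  have hrne : ENNReal.ofReal 3 ^ (((2+δ)/4:ℝ)) * B ≠ ⊤ :=
    ENNReal.mul_ne_top
      (ENNReal.rpow_ne_top_of_nonneg (div_nonneg hδp.le (by norm_num))
        ENNReal.ofReal_ne_top) hBfin
  have h1 := ENNReal.toReal_mono hrne final
  rw [ENNReal.toReal_mul] at h1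
  have h3 : (ENNReal.ofReal 3 ^ (((2+δ)/4:ℝ))).toReal = (3:ℝ) ^ ((1:ℝ)/2 + δ/4) := by
    rw [ENNReal.ofReal_rpow_of_pos (by norm_num : (0:ℝ) < 3),
      ENNReal.toReal_ofReal (Real.rpow_nonneg (by norm_num) _),
      show ((2:ℝ)+δ)/4 = 1/2 + δ/4 by ring]
  rw [h3] at h1
  rw [hAeq, hBeq]
  exact h1
end

section
/- Let h ∈ C³_b(ℝ^k, ℝ) with bounded derivatives up to order 3, let δ ∈ (0,1], and v, w, w' ∈ ℝ^k. Set γ = h(v+w) − h(v+w') − h⁽¹⁾(v)(w−w') − ½ (h⁽²⁾(v)(w,w) − h⁽²⁾(v)(w',w')). Then |γ| ≤ 6^{−δ} ‖h⁽²⁾‖_∞^{1−δ} ‖h⁽³⁾‖_∞^{δ} ( ‖w‖^{2+δ} + ‖w‖^{2(1−δ)}‖w'‖^{3δ} + ‖w‖^{3δ}‖w'‖^{2(1−δ)} + ‖w'‖^{2+δ} ). -/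
open Set

/-- Fencing step: if `F 0 = 0` and `|F' t| ≤ C t^n / n!` on `[0,1]`, then
`|F t| ≤ C t^(n+1) / (n+1)!` on `[0,1]`. -/
lemma taylor_fence_step {F F' : ℝ → ℝ} (hF : ∀ t, HasDerivAt F (F' t) t) (hF0 : F 0 = 0)
    {C : ℝ} (n : ℕ)
    (hb : ∀ t ∈ Icc (0:ℝ) 1, |F' t| ≤ C * t ^ n / n.factorial) :
    ∀ t ∈ Icc (0:ℝ) 1, |F t| ≤ C * t ^ (n + 1) / (n + 1).factorial := by
  have hB : ∀ s : ℝ, HasDerivAt (fun s : ℝ => C * s ^ (n + 1) / (n + 1).factorial)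
      (C * s ^ n / n.factorial) s := by
    intro s
    have h1 := ((hasDerivAt_pow (n + 1) s).const_mul C).div_const ((n + 1).factorial : ℝ)
    refine h1.congr_deriv ?_
    rw [Nat.factorial_succ]
    have hnf : (n.factorial : ℝ) ≠ 0 := Nat.cast_ne_zero.2 n.factorial_ne_zero
    push_cast
    field_simp
  intro t ht
  have := image_norm_le_of_norm_deriv_right_le_deriv_boundary
    (f := F) (f' := F') (a := 0) (b := 1)
    (fun x _ => (hF x).continuousAt.continuousWithinAt)
    (fun x _ => (hF x).hasDerivWithinAt)
    (by simp [hF0])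
    hB
    (fun x hx => by simpa [Real.norm_eq_abs] using hb x (Ico_subset_Icc_self hx))
    ht
  simpa [Real.norm_eq_abs] using this

lemma min_le_interp {a b : ℝ} (ha : 0 ≤ a) (hb : 0 ≤ b) {δ : ℝ} (h0 : 0 ≤ δ) (h1 : δ ≤ 1) :
    min a b ≤ a ^ (1 - δ) * b ^ δ := by
  have hm : 0 ≤ min a b := le_min ha hb
  calc min a b = (min a b) ^ ((1 - δ) + δ) := by
        rw [sub_add_cancel, Real.rpow_one]
    _ = (min a b) ^ (1 - δ) * (min a b) ^ δ := Real.rpow_add' hm (by norm_num)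
    _ ≤ a ^ (1 - δ) * b ^ δ := by
        apply mul_le_mul (Real.rpow_le_rpow hm (min_le_left _ _) (by linarith))
          (Real.rpow_le_rpow hm (min_le_right _ _) h0)
          (Real.rpow_nonneg hm δ) (Real.rpow_nonneg ha _)

lemma remainder_bound {k : ℕ} (h : EuclideanSpace ℝ (Fin k) → ℝ)
    (hh : ContDiff ℝ 3 h) (M2 M3 : ℝ)
    (hM2 : ∀ x, ‖iteratedFDeriv ℝ 2 h x‖ ≤ M2)
    (hM3 : ∀ x, ‖iteratedFDeriv ℝ 3 h x‖ ≤ M3)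
    (v u : EuclideanSpace ℝ (Fin k)) :
    |h (v + u) - h v - fderiv ℝ h v u - (1/2) * iteratedFDeriv ℝ 2 h v ![u, u]|
      ≤ min (M2 * ‖u‖ ^ 2) (M3 * ‖u‖ ^ 3 / 6) := by
  have hd1 : Differentiable ℝ h := hh.differentiable (by norm_num)
  have hd2 : Differentiable ℝ (fderiv ℝ h) :=
    (hh.fderiv_right (m := 2) (by norm_num)).differentiable (by norm_num)
  have hdI2 : Differentiable ℝ (iteratedFDeriv ℝ 2 h) :=
    hh.differentiable_iteratedFDeriv (by norm_num)
  set c : ℝ → EuclideanSpace ℝ (Fin k) := fun t => v + t • u with hc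
  have hc0 : c 0 = v := by simp [hc]
  have hc1 : c 1 = v + u := by simp [hc]
  have hline : ∀ t : ℝ, HasDerivAt c u t := by
    intro t
    exact (((hasDerivAt_id t).smul_const u).const_add v).congr_deriv (one_smul _ _)
  set g1 : ℝ → ℝ := fun t => fderiv ℝ h (c t) u with hg1def
  set g2 : ℝ → ℝ := fun t => iteratedFDeriv ℝ 2 h (c t) ![u, u] with hg2def
  have hg : ∀ t, HasDerivAt (fun t => h (c t)) (g1 t) t := fun t =>
    (hd1 (c t)).hasFDerivAt.comp_hasDerivAt t (hline t)
  have hg1 : ∀ t, HasDerivAt g1 (g2 t) t := by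
    intro t
    have h1 : HasDerivAt (fun t => fderiv ℝ h (c t)) (fderiv ℝ (fderiv ℝ h) (c t) u) t :=
      (hd2 (c t)).hasFDerivAt.comp_hasDerivAt t (hline t)
    have h2 := h1.clm_apply (hasDerivAt_const t u)
    simp only [map_zero, add_zero] at h2
    have h3 : g2 t = fderiv ℝ (fderiv ℝ h) (c t) u u := by
      rw [hg2def]
      simp [iteratedFDeriv_two_apply]
    rw [h3]
    exact h2
  have hlipI : ∀ x y : EuclideanSpace ℝ (Fin k),
      ‖iteratedFDeriv ℝ 2 h x - iteratedFDeriv ℝ 2 h y‖ ≤ M3 * ‖x - y‖ := by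
    intro x y
    exact convex_univ.norm_image_sub_le_of_norm_fderiv_le
      (fun z _ => hdI2 z)
      (fun z _ => by rw [norm_fderiv_iteratedFDeriv]; exact hM3 z)
      (mem_univ y) (mem_univ x)
  have hu2 : (0:ℝ) ≤ ‖u‖^2 := by positivity
  have hM2nn : 0 ≤ M2 := le_trans (norm_nonneg _) (hM2 0)
  have hM3nn : 0 ≤ M3 := le_trans (norm_nonneg _) (hM3 0)
  have happly : ∀ (A : ContinuousMultilinearMap ℝ (fun _ : Fin 2 => EuclideanSpace ℝ (Fin k)) ℝ),
      |A ![u, u]| ≤ ‖A‖ * ‖u‖ ^ 2 := by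
    intro A
    have := A.le_opNorm ![u, u]
    rw [Real.norm_eq_abs] at this
    calc |A ![u,u]| ≤ ‖A‖ * ∏ i, ‖(![u, u] : Fin 2 → _) i‖ := this
      _ = ‖A‖ * ‖u‖ ^ 2 := by
        rw [Fin.prod_univ_two]
        simp [sq]
  have hg2bd : ∀ t : ℝ, |g2 t| ≤ M2 * ‖u‖ ^ 2 := by
    intro t
    exact (happly _).trans (by
      have := hM2 (c t)
      nlinarith [norm_nonneg (iteratedFDeriv ℝ 2 h (c t))])
  have hg2lip : ∀ t ∈ Icc (0:ℝ) 1, |g2 t - g2 0| ≤ (M3 * ‖u‖ ^ 3) * t := by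
    intro t ht
    have heq : g2 t - g2 0 =
        (iteratedFDeriv ℝ 2 h (c t) - iteratedFDeriv ℝ 2 h (c 0)) ![u, u] := by
      simp [hg2def, ContinuousMultilinearMap.sub_apply]
    rw [heq]
    calc |(iteratedFDeriv ℝ 2 h (c t) - iteratedFDeriv ℝ 2 h (c 0)) ![u, u]|
        ≤ ‖iteratedFDeriv ℝ 2 h (c t) - iteratedFDeriv ℝ 2 h (c 0)‖ * ‖u‖ ^ 2 := happly _
      _ ≤ (M3 * ‖c t - c 0‖) * ‖u‖ ^ 2 := mul_le_mul_of_nonneg_right (hlipI _ _) hu2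
      _ = (M3 * ‖u‖ ^ 3) * t := by
          have hce : c t - c 0 = t • u := by simp [hc]
          rw [hce, norm_smul, Real.norm_eq_abs, abs_of_nonneg ht.1]
          ring
  -- bound A : |R u| ≤ M2 ‖u‖²
  have hA : |h (v + u) - h v - fderiv ℝ h v u - (1/2) * iteratedFDeriv ℝ 2 h v ![u, u]|
      ≤ M2 * ‖u‖ ^ 2 := by
    have s0 : ∀ t ∈ Icc (0:ℝ) 1, |g1 t - g1 0| ≤ (M2 * ‖u‖^2) * t ^ (0+1) / (0+1).factorial := by
      apply taylor_fence_step (F' := g2) (fun t => (hg1 t).sub_const _) (by simp) 0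
      intro t ht
      simpa using hg2bd t
    have s1 : ∀ t ∈ Icc (0:ℝ) 1,
        |h (c t) - h (c 0) - t * g1 0| ≤ (M2 * ‖u‖^2) * t ^ (1+1) / (1+1).factorial := by
      apply taylor_fence_step (F' := fun t => g1 t - g1 0)
        (fun t => ((hg t).sub_const _).sub (by simpa using (hasDerivAt_id t).mul_const (g1 0)))
        (by simp) 1
      intro t ht
      simpa using s0 t ht
    have h1 := s1 1 (by norm_num)
    rw [hc1, hc0] at h1
    norm_num at h1
    have hq : |(1/2 : ℝ) * iteratedFDeriv ℝ 2 h v ![u, u]| ≤ M2 * ‖u‖^2 / 2 := by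
      have := hg2bd 0
      rw [hg2def] at this
      simp only [hc0] at this
      rw [abs_mul]
      rw [abs_of_pos (by norm_num : (0:ℝ) < 1/2)]
      linarith
    have hg10 : g1 0 = fderiv ℝ h v u := by rw [hg1def]; simp only [hc0]
    rw [hg10] at h1
    calc |h (v + u) - h v - fderiv ℝ h v u - (1/2) * iteratedFDeriv ℝ 2 h v ![u, u]|
        ≤ |h (v + u) - h v - fderiv ℝ h v u| + |(1/2) * iteratedFDeriv ℝ 2 h v ![u, u]| :=
          abs_sub _ _
      _ ≤ M2 * ‖u‖^2 / 2 + M2 * ‖u‖^2 / 2 := add_le_add h1 hq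
      _ = M2 * ‖u‖^2 := by ring
  -- bound B : |R u| ≤ M3 ‖u‖³ / 6
  have hB : |h (v + u) - h v - fderiv ℝ h v u - (1/2) * iteratedFDeriv ℝ 2 h v ![u, u]|
      ≤ M3 * ‖u‖ ^ 3 / 6 := by
    have s0 : ∀ t ∈ Icc (0:ℝ) 1, |g1 t - g1 0 - t * g2 0|
        ≤ (M3 * ‖u‖^3) * t ^ (1+1) / (1+1).factorial := by
      apply taylor_fence_step (F' := fun t => g2 t - g2 0)
        (fun t => ((hg1 t).sub_const _).sub (by simpa using (hasDerivAt_id t).mul_const (g2 0)))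
        (by simp) 1
      intro t ht
      simpa using hg2lip t ht
    have s1 : ∀ t ∈ Icc (0:ℝ) 1,
        |h (c t) - h (c 0) - t * g1 0 - t^2 * (g2 0 / 2)|
          ≤ (M3 * ‖u‖^3) * t ^ (2+1) / (2+1).factorial := by
      apply taylor_fence_step (F' := fun t => g1 t - g1 0 - t * g2 0) ?_ (by simp) 2
      · intro t ht
        simpa using s0 t ht
      · intro t
        have hd : HasDerivAt (fun t : ℝ => h (c t) - h (c 0) - t * g1 0 - t^2 * (g2 0 / 2))
            (g1 t - g1 0 - (↑2 * t ^ (2-1)) * (g2 0 / 2)) t := by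
          exact (((hg t).sub_const _).sub
            (by simpa using (hasDerivAt_id t).mul_const (g1 0))).sub
            ((hasDerivAt_pow 2 t).mul_const (g2 0 / 2))
        convert hd using 1
        push_cast
        ring
    have h1 := s1 1 (by norm_num)
    rw [hc1, hc0] at h1
    have hg10 : g1 0 = fderiv ℝ h v u := by rw [hg1def]; simp only [hc0]
    have hg20 : g2 0 = iteratedFDeriv ℝ 2 h v ![u, u] := by rw [hg2def]; simp only [hc0]
    rw [hg10, hg20] at h1
    norm_num at h1
    calc |h (v + u) - h v - fderiv ℝ h v u - (1/2) * iteratedFDeriv ℝ 2 h v ![u, u]|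
        = |h (v + u) - h v - fderiv ℝ h v u - iteratedFDeriv ℝ 2 h v ![u, u] / 2| := by
          ring_nf
      _ ≤ M3 * ‖u‖^3 / 6 := by
          convert h1 using 2
  exact le_min hA hB

/-- For `h ∈ C³_b(ℝ^k, ℝ)`, `δ ∈ (0,1]` and `v, w, w' ∈ ℝ^k`, the quantity
`γ = h(v+w) − h(v+w') − h⁽¹⁾(v)(w−w') − ½(h⁽²⁾(v)(w,w) − h⁽²⁾(v)(w',w'))` satisfies
`|γ| ≤ 6^{−δ} ‖h⁽²⁾‖_∞^{1−δ} ‖h⁽³⁾‖_∞^δ (‖w‖^{2+δ} + ‖w‖^{2(1−δ)}‖w'‖^{3δ}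
  + ‖w‖^{3δ}‖w'‖^{2(1−δ)} + ‖w'‖^{2+δ})`. -/
theorem taylor_remainder_interpolated_bound {k : ℕ} (h : EuclideanSpace ℝ (Fin k) → ℝ)
    (hh : ContDiff ℝ 3 h)
    (hbd0 : ∃ M, ∀ x, |h x| ≤ M)
    (hbd1 : ∃ M, ∀ x, ‖fderiv ℝ h x‖ ≤ M)
    (M2 M3 : ℝ)
    (hM2 : ∀ x, ‖iteratedFDeriv ℝ 2 h x‖ ≤ M2)
    (hM3 : ∀ x, ‖iteratedFDeriv ℝ 3 h x‖ ≤ M3)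
    (δ : ℝ) (hδ : δ ∈ Set.Ioc (0 : ℝ) 1)
    (v w w' : EuclideanSpace ℝ (Fin k)) :
    |h (v + w) - h (v + w') - fderiv ℝ h v (w - w') -
        (1 / 2) * (iteratedFDeriv ℝ 2 h v ![w, w] - iteratedFDeriv ℝ 2 h v ![w', w'])| ≤
      (6 : ℝ) ^ (-δ) * M2 ^ (1 - δ) * M3 ^ δ *
        (‖w‖ ^ (2 + δ) + ‖w‖ ^ (2 * (1 - δ)) * ‖w'‖ ^ (3 * δ) +
          ‖w‖ ^ (3 * δ) * ‖w'‖ ^ (2 * (1 - δ)) + ‖w'‖ ^ (2 + δ)) := by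
  obtain ⟨hδ0, hδ1⟩ := hδ
  have hM2nn : 0 ≤ M2 := le_trans (norm_nonneg _) (hM2 0)
  have hM3nn : 0 ≤ M3 := le_trans (norm_nonneg _) (hM3 0)
  set K : ℝ := (6 : ℝ) ^ (-δ) * M2 ^ (1 - δ) * M3 ^ δ with hK
  have hKnn : 0 ≤ K :=
    mul_nonneg (mul_nonneg (Real.rpow_nonneg (by norm_num) _)
      (Real.rpow_nonneg hM2nn _)) (Real.rpow_nonneg hM3nn _)
  -- key single-increment bound
  have key : ∀ u : EuclideanSpace ℝ (Fin k),
      |h (v + u) - h v - fderiv ℝ h v u - (1/2) * iteratedFDeriv ℝ 2 h v ![u, u]|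
        ≤ K * ‖u‖ ^ (2 + δ) := by
    intro u
    have hnu : (0:ℝ) ≤ ‖u‖ := norm_nonneg u
    have h1 := (remainder_bound h hh M2 M3 hM2 hM3 v u).trans
      (min_le_interp (by positivity) (by positivity) hδ0.le hδ1)
    refine h1.trans_eq ?_
    have e2 : ((‖u‖^2 : ℝ))^(1-δ) = ‖u‖^(2*(1-δ)) := by
      rw [← Real.rpow_natCast ‖u‖ 2, ← Real.rpow_mul hnu]
      norm_num
    have e3 : ((‖u‖^3 : ℝ))^δ = ‖u‖^(3*δ) := by
      rw [← Real.rpow_natCast ‖u‖ 3, ← Real.rpow_mul hnu]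
      norm_num
    have e6 : ((6:ℝ)⁻¹)^δ = (6:ℝ)^(-δ) := by
      rw [Real.inv_rpow (by norm_num), ← Real.rpow_neg (by norm_num)]
    have hne : 2*(1-δ)+3*δ ≠ 0 := by intro h0; nlinarith
    have esum : ‖u‖^(2*(1-δ)) * ‖u‖^(3*δ) = ‖u‖^(2+δ) := by
      rw [← Real.rpow_add' hnu hne]
      congr 1
      ring
    rw [show M3*‖u‖^3/6 = (6:ℝ)⁻¹*(M3*‖u‖^3) by ring,
      Real.mul_rpow hM2nn (by positivity),
      Real.mul_rpow (by norm_num) (mul_nonneg hM3nn (by positivity)),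
      Real.mul_rpow hM3nn (by positivity), e2, e3, e6, hK, ← esum]
    ring
  -- decompose γ = R w − R w'
  have hmap : fderiv ℝ h v (w - w') = fderiv ℝ h v w - fderiv ℝ h v w' := map_sub _ _ _
  have hdecomp : h (v + w) - h (v + w') - fderiv ℝ h v (w - w') -
      (1 / 2) * (iteratedFDeriv ℝ 2 h v ![w, w] - iteratedFDeriv ℝ 2 h v ![w', w'])
      = (h (v + w) - h v - fderiv ℝ h v w - (1/2) * iteratedFDeriv ℝ 2 h v ![w, w])
        - (h (v + w') - h v - fderiv ℝ h v w' - (1/2) * iteratedFDeriv ℝ 2 h v ![w', w']) := by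
    rw [hmap]; ring
  have hT2 : 0 ≤ ‖w‖ ^ (2 * (1 - δ)) * ‖w'‖ ^ (3 * δ) :=
    mul_nonneg (Real.rpow_nonneg (norm_nonneg _) _) (Real.rpow_nonneg (norm_nonneg _) _)
  have hT3 : 0 ≤ ‖w‖ ^ (3 * δ) * ‖w'‖ ^ (2 * (1 - δ)) :=
    mul_nonneg (Real.rpow_nonneg (norm_nonneg _) _) (Real.rpow_nonneg (norm_nonneg _) _)
  calc |h (v + w) - h (v + w') - fderiv ℝ h v (w - w') -
      (1 / 2) * (iteratedFDeriv ℝ 2 h v ![w, w] - iteratedFDeriv ℝ 2 h v ![w', w'])|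
      ≤ |h (v + w) - h v - fderiv ℝ h v w - (1/2) * iteratedFDeriv ℝ 2 h v ![w, w]|
        + |h (v + w') - h v - fderiv ℝ h v w' - (1/2) * iteratedFDeriv ℝ 2 h v ![w', w']| := by
        rw [hdecomp]; exact abs_sub _ _
    _ ≤ K * ‖w‖ ^ (2 + δ) + K * ‖w'‖ ^ (2 + δ) := add_le_add (key w) (key w')
    _ ≤ K * (‖w‖ ^ (2 + δ) + ‖w‖ ^ (2 * (1 - δ)) * ‖w'‖ ^ (3 * δ) +
          ‖w‖ ^ (3 * δ) * ‖w'‖ ^ (2 * (1 - δ)) + ‖w'‖ ^ (2 + δ)) := by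
        nlinarith [mul_nonneg hKnn hT2, mul_nonneg hKnn hT3]
end

section
/- Let V, W, W' be ℝ^k-valued random vectors with V independent of (W, W'), E W = E W' = 0, Cov(W) = Cov(W'), E‖W‖^{2+δ} < ∞ and E‖W'‖^{2+δ} < ∞ for some δ ∈ (0,1], and let h ∈ C³_b(ℝ^k). Then |E[h(V+W) − h(V+W')]| ≤ 6^{−δ} ‖h⁽²⁾‖_∞^{1−δ} ‖h⁽³⁾‖_∞^{δ} E( ‖W‖^{2+δ} + ‖W‖^{2(1−δ)}‖W'‖^{3δ} + ‖W‖^{3δ}‖W'‖^{2(1−δ)} + ‖W'‖^{2+δ} ). -/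
open MeasureTheory ProbabilityTheory
open scoped ProbabilityTheory

open Set

open Set

-- generic 1-D second-order Taylor bounds, given global HasDerivAt data
lemma taylor_one_dim {g g1 g2 g3 : ℝ → ℝ}
    (hgC : ContDiff ℝ 3 g)
    (hg : ∀ t, HasDerivAt g (g1 t) t) (hg1 : ∀ t, HasDerivAt g1 (g2 t) t)
    (hg2 : ∀ t, HasDerivAt g2 (g3 t) t) {K2 K3 : ℝ}
    (hK2 : ∀ t, |g2 t| ≤ K2) (hK3 : ∀ t, |g3 t| ≤ K3) :
    |g 1 - g 0 - g1 0 - (1/2) * g2 0| ≤ min K2 (K3 / 6) := by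
  have hs : UniqueDiffOn ℝ (Icc (0:ℝ) 1) := uniqueDiffOn_Icc zero_lt_one
  have h0 : (0:ℝ) ∈ Icc (0:ℝ) 1 := by norm_num
  have e1 : ∀ t ∈ Icc (0:ℝ) 1, iteratedDerivWithin 1 g (Icc 0 1) t = g1 t := by
    intro t ht
    rw [iteratedDerivWithin_one, (hg t).differentiableAt.derivWithin (hs t ht),
      (hg t).deriv]
  have e2 : ∀ t ∈ Icc (0:ℝ) 1, iteratedDerivWithin 2 g (Icc 0 1) t = g2 t := by
    intro t ht
    rw [iteratedDerivWithin_succ,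
      derivWithin_congr (fun y hy => e1 y hy) (e1 t ht),
      (hg1 t).differentiableAt.derivWithin (hs t ht), (hg1 t).deriv]
  have e3 : ∀ t ∈ Icc (0:ℝ) 1, iteratedDerivWithin 3 g (Icc 0 1) t = g3 t := by
    intro t ht
    rw [iteratedDerivWithin_succ,
      derivWithin_congr (fun y hy => e2 y hy) (e2 t ht),
      (hg2 t).differentiableAt.derivWithin (hs t ht), (hg2 t).deriv]
  have hbd1 : |g 1 - g 0 - g1 0 - (1/2) * g2 0| ≤ K2 := by
    obtain ⟨c, hc, hTay⟩ := taylor_mean_remainder_lagrange (n := 1) (x₀ := 0) (x := 1) zero_ne_one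
      (by rw [uIcc_of_le zero_le_one]; exact (hgC.of_le (by norm_num)).contDiffOn)
      (by
        rw [uIcc_of_le zero_le_one, uIoo_of_le zero_le_one]
        exact fun t ht => ((hg1 t).differentiableAt.differentiableWithinAt).congr
          (fun y hy => e1 y (Ioo_subset_Icc_self hy)) (e1 t (Ioo_subset_Icc_self ht)))
    rw [uIoo_of_le zero_le_one] at hc
    rw [uIcc_of_le zero_le_one] at hTay
    have hT : taylorWithinEval g 1 (Icc (0:ℝ) 1) 0 1 = g 0 + g1 0 := by
      simp [taylorWithinEval_succ, e1 0 h0]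
    rw [hT, e2 c (Ioo_subset_Icc_self hc)] at hTay
    have h2c : g 1 - (g 0 + g1 0) = g2 c / 2 := by
      rw [hTay]; norm_num [Nat.factorial]
    have : g 1 - g 0 - g1 0 - (1/2) * g2 0 = g2 c / 2 - (1/2) * g2 0 := by linarith
    rw [this]
    have a0 := abs_sub (g2 c / 2) ((1/2) * g2 0)
    have a1 : |g2 c / 2| ≤ K2 / 2 := by
      rw [abs_div]; norm_num; linarith [hK2 c]
    have a2 : |(1/2) * g2 0| ≤ K2 / 2 := by
      rw [abs_mul, abs_of_nonneg (by norm_num : (0:ℝ) ≤ 1/2)]; linarith [hK2 0]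
    linarith
  have hbd2 : |g 1 - g 0 - g1 0 - (1/2) * g2 0| ≤ K3 / 6 := by
    obtain ⟨c, hc, hTay⟩ := taylor_mean_remainder_lagrange (n := 2) (x₀ := 0) (x := 1) zero_ne_one
      (by rw [uIcc_of_le zero_le_one]; exact (hgC.of_le (by norm_num)).contDiffOn)
      (by
        rw [uIcc_of_le zero_le_one, uIoo_of_le zero_le_one]
        exact fun t ht => ((hg2 t).differentiableAt.differentiableWithinAt).congr
          (fun y hy => e2 y (Ioo_subset_Icc_self hy)) (e2 t (Ioo_subset_Icc_self ht)))
    rw [uIoo_of_le zero_le_one] at hc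
    rw [uIcc_of_le zero_le_one] at hTay
    have hT : taylorWithinEval g 2 (Icc (0:ℝ) 1) 0 1 = g 0 + g1 0 + (1/2) * g2 0 := by
      simp only [taylorWithinEval_succ, taylor_within_zero_eval, e1 0 h0, e2 0 h0, smul_eq_mul]
      norm_num
    rw [hT, e3 c (Ioo_subset_Icc_self hc)] at hTay
    have h3c : g 1 - (g 0 + g1 0 + (1/2) * g2 0) = g3 c / 6 := by
      rw [hTay]; norm_num [Nat.factorial]
    have : g 1 - g 0 - g1 0 - (1/2) * g2 0 = g3 c / 6 := by linarith
    rw [this, abs_div]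
    rw [abs_of_nonneg (by norm_num : (0:ℝ) ≤ 6)]
    have := hK3 c
    gcongr
  exact le_min hbd1 hbd2

section Taylor
variable {E : Type*} [NormedAddCommGroup E] [NormedSpace ℝ E]

lemma taylor2_pointwise (h : E → ℝ) (hh : ContDiff ℝ 3 h) (M2 M3 : ℝ)
    (hM2 : ∀ x, ‖iteratedFDeriv ℝ 2 h x‖ ≤ M2) (hM3 : ∀ x, ‖iteratedFDeriv ℝ 3 h x‖ ≤ M3)
    (x w : E) :
    |h (x + w) - h x - fderiv ℝ h x w - (1/2) * fderiv ℝ (fderiv ℝ h) x w w|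
      ≤ min (M2 * ‖w‖ ^ 2) (M3 / 6 * ‖w‖ ^ 3) := by
  have hc1 : ContDiff ℝ 2 (fderiv ℝ h) := hh.fderiv_right (by norm_num)
  have hc2 : ContDiff ℝ 1 (fderiv ℝ (fderiv ℝ h)) := hc1.fderiv_right (by norm_num)
  have hd0 : Differentiable ℝ h := hh.differentiable (by norm_num)
  have hd1 : Differentiable ℝ (fderiv ℝ h) := hc1.differentiable (by norm_num)
  have hd2 : Differentiable ℝ (fderiv ℝ (fderiv ℝ h)) := hc2.differentiable (by norm_num)
  letI : NormedAddCommGroup (E →L[ℝ] E →L[ℝ] ℝ) := inferInstance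
  letI : NormedSpace ℝ (E →L[ℝ] E →L[ℝ] ℝ) := inferInstance
  have hn3 : ∀ z, ‖fderiv ℝ (fderiv ℝ (fderiv ℝ h)) z‖ ≤ M3 := by
    intro z
    rw [show ‖fderiv ℝ (fderiv ℝ (fderiv ℝ h)) z‖
        = ‖iteratedFDeriv ℝ 0 (fderiv ℝ (fderiv ℝ (fderiv ℝ h))) z‖ from
      (norm_iteratedFDeriv_zero (f := fderiv ℝ (fderiv ℝ (fderiv ℝ h))) (x := z)).symm,
      norm_iteratedFDeriv_fderiv, norm_iteratedFDeriv_fderiv, norm_iteratedFDeriv_fderiv]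
    exact hM3 z
  have hn2 : ∀ z, ‖fderiv ℝ (fderiv ℝ h) z‖ ≤ M2 := by
    intro z
    rw [show ‖fderiv ℝ (fderiv ℝ h) z‖
        = ‖iteratedFDeriv ℝ 0 (fderiv ℝ (fderiv ℝ h)) z‖ from
        (norm_iteratedFDeriv_zero (f := fderiv ℝ (fderiv ℝ h)) (x := z)).symm,
      norm_iteratedFDeriv_fderiv, norm_iteratedFDeriv_fderiv]
    exact hM2 z
  have hL : ∀ t : ℝ, HasDerivAt (fun t : ℝ => x + t • w) w t := by
    intro t
    simpa using ((hasDerivAt_id t).smul_const w).const_add x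
  have hg : ∀ t : ℝ, HasDerivAt (fun t : ℝ => h (x + t • w)) (fderiv ℝ h (x + t • w) w) t :=
    fun t => (hd0 _).hasFDerivAt.comp_hasDerivAt t (hL t)
  have hg1 : ∀ t : ℝ, HasDerivAt (fun t : ℝ => fderiv ℝ h (x + t • w) w)
      (fderiv ℝ (fderiv ℝ h) (x + t • w) w w) t := by
    intro t
    have h1 : HasDerivAt (fun t : ℝ => fderiv ℝ h (x + t • w))
        (fderiv ℝ (fderiv ℝ h) (x + t • w) w) t :=
      (hd1 _).hasFDerivAt.comp_hasDerivAt t (hL t)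
    simpa using h1.clm_apply (hasDerivAt_const t w)
  have hg2 : ∀ t : ℝ, HasDerivAt (fun t : ℝ => fderiv ℝ (fderiv ℝ h) (x + t • w) w w)
      (fderiv ℝ (fderiv ℝ (fderiv ℝ h)) (x + t • w) w w w) t := by
    intro t
    have h1 : HasDerivAt (fun t : ℝ => fderiv ℝ (fderiv ℝ h) (x + t • w))
        (fderiv ℝ (fderiv ℝ (fderiv ℝ h)) (x + t • w) w) t :=
      (hd2 _).hasFDerivAt.comp_hasDerivAt t (hL t)
    have h2 := h1.clm_apply (hasDerivAt_const t w)
    simpa using h2.clm_apply (hasDerivAt_const t w)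
  have hgC : ContDiff ℝ 3 (fun t : ℝ => h (x + t • w)) :=
    hh.comp (contDiff_const.add (contDiff_id.smul contDiff_const))
  have hK2 : ∀ t : ℝ, |fderiv ℝ (fderiv ℝ h) (x + t • w) w w| ≤ M2 * ‖w‖ ^ 2 := by
    intro t
    calc |fderiv ℝ (fderiv ℝ h) (x + t • w) w w|
        ≤ ‖fderiv ℝ (fderiv ℝ h) (x + t • w) w‖ * ‖w‖ :=
          (fderiv ℝ (fderiv ℝ h) (x + t • w) w).le_opNorm w
      _ ≤ (‖fderiv ℝ (fderiv ℝ h) (x + t • w)‖ * ‖w‖) * ‖w‖ := by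
          gcongr
          exact (fderiv ℝ (fderiv ℝ h) (x + t • w)).le_opNorm w
      _ ≤ (M2 * ‖w‖) * ‖w‖ := by
          have := hn2 (x + t • w)
          gcongr
      _ = M2 * ‖w‖ ^ 2 := by ring
  have hK3 : ∀ t : ℝ, |fderiv ℝ (fderiv ℝ (fderiv ℝ h)) (x + t • w) w w w| ≤ M3 * ‖w‖ ^ 3 := by
    intro t
    calc |fderiv ℝ (fderiv ℝ (fderiv ℝ h)) (x + t • w) w w w|
        ≤ ‖fderiv ℝ (fderiv ℝ (fderiv ℝ h)) (x + t • w) w w‖ * ‖w‖ :=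
          (fderiv ℝ (fderiv ℝ (fderiv ℝ h)) (x + t • w) w w).le_opNorm w
      _ ≤ (‖fderiv ℝ (fderiv ℝ (fderiv ℝ h)) (x + t • w) w‖ * ‖w‖) * ‖w‖ := by
          gcongr
          exact (fderiv ℝ (fderiv ℝ (fderiv ℝ h)) (x + t • w) w).le_opNorm w
      _ ≤ ((‖fderiv ℝ (fderiv ℝ (fderiv ℝ h)) (x + t • w)‖ * ‖w‖) * ‖w‖) * ‖w‖ := by
          gcongr
          exact (fderiv ℝ (fderiv ℝ (fderiv ℝ h)) (x + t • w)).le_opNorm w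
      _ ≤ ((M3 * ‖w‖) * ‖w‖) * ‖w‖ := by
          have := hn3 (x + t • w)
          gcongr
      _ = M3 * ‖w‖ ^ 3 := by ring
  have key := taylor_one_dim hgC hg hg1 hg2 hK2 hK3
  simp only [one_smul, zero_smul, add_zero] at key
  have e6 : M3 * ‖w‖ ^ 3 / 6 = M3 / 6 * ‖w‖ ^ 3 := by ring
  rw [e6] at key
  exact key

end Taylor


lemma min_rpow_bound {δ M2 M3 a : ℝ} (hδ0 : 0 < δ) (hδ1 : δ ≤ 1) (hM2 : 0 ≤ M2)
    (hM3 : 0 ≤ M3) (ha : 0 ≤ a) :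
    min (M2 * a ^ 2) (M3 / 6 * a ^ 3) ≤ (6:ℝ) ^ (-δ) * M2 ^ (1-δ) * M3 ^ δ * a ^ (2+δ) := by
  set A := M2 * a ^ 2 with hAdef
  set B := M3 / 6 * a ^ 3 with hBdef
  have hA : 0 ≤ A := by positivity
  have hB : 0 ≤ B := by positivity
  have hm : 0 ≤ min A B := le_min hA hB
  have key : min A B ≤ A ^ (1-δ) * B ^ δ := by
    have e : min A B = (min A B) ^ (1-δ) * (min A B) ^ δ := by
      rcases hm.eq_or_lt with h0 | hpos
      · rw [← h0, Real.zero_rpow hδ0.ne', mul_zero]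
      · rw [← Real.rpow_add hpos, sub_add_cancel, Real.rpow_one]
    rw [e]
    exact mul_le_mul (Real.rpow_le_rpow hm (min_le_left _ _) (by linarith))
      (Real.rpow_le_rpow hm (min_le_right _ _) hδ0.le)
      (Real.rpow_nonneg hm δ) (Real.rpow_nonneg hA _)
  refine key.trans (le_of_eq ?_)
  rw [hAdef, hBdef]
  rw [Real.mul_rpow hM2 (by positivity), Real.mul_rpow (by positivity : (0:ℝ) ≤ M3/6) (by positivity)]
  rw [Real.div_rpow hM3 (by norm_num : (0:ℝ) ≤ 6)]
  rw [← Real.rpow_natCast a 2, ← Real.rpow_natCast a 3, ← Real.rpow_mul ha, ← Real.rpow_mul ha]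
  have e2 : a ^ ((2:ℕ) * (1 - δ)) * a ^ ((3:ℕ) * δ) = a ^ (2 + δ) := by
    rw [← Real.rpow_add' ha (by push_cast; nlinarith)]
    norm_num
    ring_nf
  have e6 : M3 ^ δ / (6:ℝ) ^ δ = M3 ^ δ * (6:ℝ) ^ (-δ) := by
    rw [Real.rpow_neg (by norm_num : (0:ℝ) ≤ 6)]
    ring
  rw [e6]
  calc M2 ^ (1-δ) * a ^ ((2:ℕ) * (1 - δ)) * (M3 ^ δ * (6:ℝ)^(-δ) * a ^ ((3:ℕ) * δ))
      = (6:ℝ)^(-δ) * M2 ^ (1-δ) * M3 ^ δ * (a ^ ((2:ℕ) * (1 - δ)) * a ^ ((3:ℕ) * δ)) := by ring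
    _ = (6:ℝ)^(-δ) * M2 ^ (1-δ) * M3 ^ δ * a ^ (2+δ) := by rw [e2]

lemma cross_rpow_le {a b p q : ℝ} (ha : 0 ≤ a) (hb : 0 ≤ b) (hp : 0 ≤ p) (hq : 0 ≤ q)
    (hpq : 0 < p + q) : a ^ p * b ^ q ≤ a ^ (p+q) + b ^ (p+q) := by
  rcases le_total a b with hab | hab
  · have h1 : a ^ p * b ^ q ≤ b ^ p * b ^ q :=
      mul_le_mul_of_nonneg_right (Real.rpow_le_rpow ha hab hp) (Real.rpow_nonneg hb q)
    have h2 : b ^ p * b ^ q = b ^ (p + q) := (Real.rpow_add' hb hpq.ne').symm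
    calc a ^ p * b ^ q ≤ b ^ (p+q) := h1.trans_eq h2
      _ ≤ a ^ (p+q) + b ^ (p+q) := le_add_of_nonneg_left (Real.rpow_nonneg ha _)
  · have h1 : a ^ p * b ^ q ≤ a ^ p * a ^ q :=
      mul_le_mul_of_nonneg_left (Real.rpow_le_rpow hb hab hq) (Real.rpow_nonneg ha p)
    have h2 : a ^ p * a ^ q = a ^ (p + q) := (Real.rpow_add' ha hpq.ne').symm
    calc a ^ p * b ^ q ≤ a ^ (p+q) := h1.trans_eq h2
      _ ≤ a ^ (p+q) + b ^ (p+q) := le_add_of_nonneg_right (Real.rpow_nonneg hb _)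

lemma le_one_add_rpow' {δ a : ℝ} (hδ0 : 0 < δ) (ha : 0 ≤ a) : a ≤ 1 + a ^ (2+δ) := by
  rcases le_total a 1 with h1 | h1
  · exact h1.trans (le_add_of_nonneg_right (Real.rpow_nonneg ha _))
  · calc a = a ^ (1:ℝ) := (Real.rpow_one a).symm
      _ ≤ a ^ (2+δ) := Real.rpow_le_rpow_of_exponent_le h1 (by linarith)
      _ ≤ 1 + a ^ (2+δ) := le_add_of_nonneg_left one_pos.le

lemma sq_le_one_add_rpow' {δ a : ℝ} (hδ0 : 0 < δ) (ha : 0 ≤ a) : a ^ 2 ≤ 1 + a ^ (2+δ) := by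
  rcases le_total a 1 with h1 | h1
  · have h2 : a ^ 2 ≤ 1 := pow_le_one₀ ha h1
    exact h2.trans (le_add_of_nonneg_right (Real.rpow_nonneg ha _))
  · calc a ^ 2 = a ^ ((2:ℕ):ℝ) := (Real.rpow_natCast a 2).symm
      _ ≤ a ^ (2+δ) := Real.rpow_le_rpow_of_exponent_le h1 (by push_cast; linarith)
      _ ≤ 1 + a ^ (2+δ) := le_add_of_nonneg_left one_pos.le

lemma clm_apply_expand' {k : ℕ} (L : EuclideanSpace ℝ (Fin k) →L[ℝ] ℝ)
    (w : EuclideanSpace ℝ (Fin k)) :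
    L w = ∑ i, w i * L (EuclideanSpace.single i 1) := by
  conv_lhs => rw [← (EuclideanSpace.basisFun (Fin k) ℝ).sum_repr w]
  rw [map_sum]
  refine Finset.sum_congr rfl fun i _ => ?_
  rw [_root_.map_smul, EuclideanSpace.basisFun_apply, EuclideanSpace.basisFun_repr, smul_eq_mul]

lemma coord_abs_le_norm' {k : ℕ} (w : EuclideanSpace ℝ (Fin k)) (i : Fin k) : |w i| ≤ ‖w‖ := by
  have h1 : (inner ℝ (EuclideanSpace.single i (1:ℝ)) w : ℝ) = w i := by
    rw [EuclideanSpace.inner_single_left]; simp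
  calc |w i| = |(inner ℝ (EuclideanSpace.single i (1:ℝ)) w : ℝ)| := by rw [h1]
    _ ≤ ‖EuclideanSpace.single i (1:ℝ)‖ * ‖w‖ := abs_real_inner_le_norm _ _
    _ = ‖w‖ := by rw [EuclideanSpace.norm_single]; simp

lemma taylor_integral_decomp {k : ℕ} {Ω : Type*} [MeasureSpace Ω]
    [IsProbabilityMeasure (ℙ : Measure Ω)]
    (V X : Ω → EuclideanSpace ℝ (Fin k))
    (hVm : AEMeasurable V) (hXm : AEMeasurable X)
    (hindep : IndepFun V X)
    (hXcent : ∫ ω, X ω = 0)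
    (hXv : Integrable X) (hXnorm : Integrable (fun ω => ‖X ω‖))
    (hXsq : Integrable (fun ω => ‖X ω‖ ^ 2))
    (h : EuclideanSpace ℝ (Fin k) → ℝ) (hh : ContDiff ℝ 3 h)
    (M0 M1 M2 : ℝ) (hM0 : ∀ x, |h x| ≤ M0) (hM1 : ∀ x, ‖fderiv ℝ h x‖ ≤ M1)
    (hM2' : ∀ z, ‖fderiv ℝ (fderiv ℝ h) z‖ ≤ M2) :
    ∫ ω, h (V ω + X ω)
      = (∫ ω, (h (V ω + X ω) - h (V ω) - fderiv ℝ h (V ω) (X ω)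
          - (1/2) * fderiv ℝ (fderiv ℝ h) (V ω) (X ω) (X ω)))
        + (∫ ω, h (V ω))
        + (1/2) * ∑ i, ∑ j, (∫ ω, X ω i * X ω j) *
            (∫ ω, fderiv ℝ (fderiv ℝ h) (V ω) (EuclideanSpace.single i 1)
              (EuclideanSpace.single j 1)) := by
  have hhc : Continuous h := hh.continuous
  have hc1 : ContDiff ℝ 2 (fderiv ℝ h) := hh.fderiv_right (by norm_num)
  have hc2 : ContDiff ℝ 1 (fderiv ℝ (fderiv ℝ h)) := hc1.fderiv_right (by norm_num)
  have hd1c : Continuous (fderiv ℝ h) := hc1.continuous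
  have hd2c : Continuous (fderiv ℝ (fderiv ℝ h)) := hc2.continuous
  -- basic measurability
  have hVXm : AEMeasurable (fun ω => V ω + X ω) := hVm.add hXm
  have mh : ∀ (Y : Ω → EuclideanSpace ℝ (Fin k)), AEMeasurable Y →
      Integrable (fun ω => h (Y ω)) := by
    intro Y hY
    refine Integrable.mono' (integrable_const M0)
      (hhc.measurable.comp_aemeasurable hY).aestronglyMeasurable (ae_of_all _ fun ω => ?_)
    simpa [Real.norm_eq_abs] using hM0 (Y ω)
  have inth1 : Integrable (fun ω => h (V ω + X ω)) := mh _ hVXm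
  have inth2 : Integrable (fun ω => h (V ω)) := mh _ hVm
  -- linear term
  have mlin : AEStronglyMeasurable (fun ω => fderiv ℝ h (V ω) (X ω)) := by
    have c1 : Continuous (fun p : EuclideanSpace ℝ (Fin k) × EuclideanSpace ℝ (Fin k) =>
        fderiv ℝ h p.1 p.2) :=
      isBoundedBilinearMap_apply.continuous.comp
        ((hd1c.comp continuous_fst).prodMk continuous_snd)
    exact (c1.measurable.comp_aemeasurable (hVm.prodMk hXm)).aestronglyMeasurable
  have intlin : Integrable (fun ω => fderiv ℝ h (V ω) (X ω)) := by
    refine Integrable.mono' (hXnorm.const_mul M1) mlin (ae_of_all _ fun ω => ?_)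
    rw [Real.norm_eq_abs]
    calc |fderiv ℝ h (V ω) (X ω)| ≤ ‖fderiv ℝ h (V ω)‖ * ‖X ω‖ :=
          (fderiv ℝ h (V ω)).le_opNorm (X ω)
      _ ≤ M1 * ‖X ω‖ := by have := hM1 (V ω); gcongr
  -- quadratic term measurability/integrability
  have cquad : Continuous (fun p : EuclideanSpace ℝ (Fin k) × EuclideanSpace ℝ (Fin k) =>
      fderiv ℝ (fderiv ℝ h) p.1 p.2 p.2) := by
    have ca : Continuous (fun p : EuclideanSpace ℝ (Fin k) × EuclideanSpace ℝ (Fin k) =>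
        (fderiv ℝ (fderiv ℝ h) p.1) p.2) :=
      isBoundedBilinearMap_apply.continuous.comp
        ((hd2c.comp continuous_fst).prodMk continuous_snd)
    exact isBoundedBilinearMap_apply.continuous.comp (ca.prodMk continuous_snd)
  have mquad : AEStronglyMeasurable (fun ω => fderiv ℝ (fderiv ℝ h) (V ω) (X ω) (X ω)) :=
    (cquad.measurable.comp_aemeasurable (hVm.prodMk hXm)).aestronglyMeasurable
  have quadbd : ∀ (v x : EuclideanSpace ℝ (Fin k)),
      |fderiv ℝ (fderiv ℝ h) v x x| ≤ M2 * ‖x‖ ^ 2 := by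
    intro v x
    calc |fderiv ℝ (fderiv ℝ h) v x x| ≤ ‖fderiv ℝ (fderiv ℝ h) v x‖ * ‖x‖ :=
        (fderiv ℝ (fderiv ℝ h) v x).le_opNorm x
      _ ≤ (‖fderiv ℝ (fderiv ℝ h) v‖ * ‖x‖) * ‖x‖ := by
          gcongr; exact (fderiv ℝ (fderiv ℝ h) v).le_opNorm x
      _ ≤ (M2 * ‖x‖) * ‖x‖ := by have := hM2' v; gcongr
      _ = M2 * ‖x‖ ^ 2 := by ring
  have intquad : Integrable (fun ω => fderiv ℝ (fderiv ℝ h) (V ω) (X ω) (X ω)) := by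
    refine Integrable.mono' (hXsq.const_mul M2) mquad (ae_of_all _ fun ω => ?_)
    rw [Real.norm_eq_abs]
    exact quadbd (V ω) (X ω)
  -- coordinate measurability
  have mXi : ∀ i, AEMeasurable (fun ω => X ω i) := fun i =>
    ((EuclideanSpace.proj (𝕜 := ℝ) i).continuous.measurable).comp_aemeasurable hXm
  have mCi : ∀ i : Fin k, AEMeasurable
      (fun ω => fderiv ℝ h (V ω) (EuclideanSpace.single i 1)) := fun i => by
    have : Continuous (fun v => fderiv ℝ h v (EuclideanSpace.single i (1:ℝ))) :=
      isBoundedBilinearMap_apply.continuous.comp (hd1c.prodMk continuous_const)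
    exact this.measurable.comp_aemeasurable hVm
  have mCij : ∀ i j : Fin k, AEMeasurable (fun ω => fderiv ℝ (fderiv ℝ h) (V ω)
      (EuclideanSpace.single i 1) (EuclideanSpace.single j 1)) := fun i j => by
    have c0 : Continuous (fun v => (fderiv ℝ (fderiv ℝ h) v)
        (EuclideanSpace.single i (1:ℝ))) :=
      isBoundedBilinearMap_apply.continuous.comp (hd2c.prodMk continuous_const)
    have : Continuous (fun v => fderiv ℝ (fderiv ℝ h) v (EuclideanSpace.single i (1:ℝ))
        (EuclideanSpace.single j (1:ℝ))) :=
      isBoundedBilinearMap_apply.continuous.comp (c0.prodMk continuous_const)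
    exact this.measurable.comp_aemeasurable hVm
  -- the linear term integrates to zero
  have hlin0 : ∫ ω, fderiv ℝ h (V ω) (X ω) = 0 := by
    have expand : (fun ω => fderiv ℝ h (V ω) (X ω)) = fun ω =>
        ∑ i, X ω i * fderiv ℝ h (V ω) (EuclideanSpace.single i 1) :=
      funext fun ω => clm_apply_expand' _ _
    have intterm : ∀ i : Fin k, Integrable
        (fun ω => X ω i * fderiv ℝ h (V ω) (EuclideanSpace.single i 1)) := by
      intro i
      refine Integrable.mono' (hXnorm.const_mul M1)
        ((mXi i).mul (mCi i)).aestronglyMeasurable (ae_of_all _ fun ω => ?_)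
      rw [Real.norm_eq_abs, abs_mul]
      have b1 : |X ω i| ≤ ‖X ω‖ := coord_abs_le_norm' _ _
      have e1 : ‖EuclideanSpace.single i (1:ℝ)‖ = 1 := by
        rw [EuclideanSpace.norm_single]; simp
      have b2 : |fderiv ℝ h (V ω) (EuclideanSpace.single i 1)| ≤ M1 := by
        have := (fderiv ℝ h (V ω)).le_opNorm (EuclideanSpace.single i (1:ℝ))
        rw [e1, mul_one] at this
        exact this.trans (hM1 (V ω))
      have := mul_le_mul b1 b2 (abs_nonneg _) (norm_nonneg _)
      linarith [this]
    rw [expand, integral_finset_sum _ (fun i _ => intterm i)]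
    refine Finset.sum_eq_zero fun i _ => ?_
    have indXi : IndepFun (fun ω => X ω i)
        (fun ω => fderiv ℝ h (V ω) (EuclideanSpace.single i 1)) := by
      have mφ : Measurable (fun x : EuclideanSpace ℝ (Fin k) => x i) :=
        (EuclideanSpace.proj (𝕜 := ℝ) i).continuous.measurable
      have mψ : Measurable (fun v : EuclideanSpace ℝ (Fin k) =>
          fderiv ℝ h v (EuclideanSpace.single i 1)) :=
        (isBoundedBilinearMap_apply.continuous.comp (hd1c.prodMk continuous_const)).measurable
      exact (hindep.symm).comp mφ mψ
    have hmul := indXi.integral_mul_eq_mul_integral (mXi i).aestronglyMeasurable (mCi i).aestronglyMeasurable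
    have hXi0 : ∫ ω, X ω i = 0 := by
      have hc := (EuclideanSpace.proj (𝕜 := ℝ) i).integral_comp_comm hXv
      rw [hXcent] at hc
      simpa using hc
    calc ∫ ω, X ω i * fderiv ℝ h (V ω) (EuclideanSpace.single i 1)
        = (∫ ω, X ω i) * ∫ ω, fderiv ℝ h (V ω) (EuclideanSpace.single i 1) := hmul
      _ = 0 := by rw [hXi0, zero_mul]
  -- the quadratic term
  have hquadsum : ∫ ω, fderiv ℝ (fderiv ℝ h) (V ω) (X ω) (X ω)
      = ∑ i, ∑ j, (∫ ω, X ω i * X ω j) *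
          (∫ ω, fderiv ℝ (fderiv ℝ h) (V ω) (EuclideanSpace.single i 1)
            (EuclideanSpace.single j 1)) := by
    have expand : ∀ (B : EuclideanSpace ℝ (Fin k) →L[ℝ] EuclideanSpace ℝ (Fin k) →L[ℝ] ℝ)
        (x : EuclideanSpace ℝ (Fin k)), B x x = ∑ i, ∑ j, x i * x j *
          B (EuclideanSpace.single i 1) (EuclideanSpace.single j 1) := by
      intro B x
      calc B x x = ∑ j, x j * B x (EuclideanSpace.single j 1) := clm_apply_expand' (B x) x
        _ = ∑ j, x j * ∑ i, x i * B (EuclideanSpace.single i 1) (EuclideanSpace.single j 1) := by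
            refine Finset.sum_congr rfl fun j _ => ?_
            congr 1
            have e1 : B x (EuclideanSpace.single j 1) = (B.flip (EuclideanSpace.single j 1)) x :=
              rfl
            rw [e1, clm_apply_expand' (B.flip (EuclideanSpace.single j 1)) x]
            rfl
        _ = ∑ i, ∑ j, x i * x j * B (EuclideanSpace.single i 1) (EuclideanSpace.single j 1) := by
            rw [Finset.sum_comm]
            refine Finset.sum_congr rfl fun j _ => ?_
            rw [Finset.mul_sum]
            refine Finset.sum_congr rfl fun i _ => ?_
            ring
    have intij : ∀ i j : Fin k, Integrable (fun ω => X ω i * X ω j *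
        fderiv ℝ (fderiv ℝ h) (V ω) (EuclideanSpace.single i 1) (EuclideanSpace.single j 1)) := by
      intro i j
      refine Integrable.mono' (hXsq.const_mul M2)
        (((mXi i).mul (mXi j)).mul (mCij i j)).aestronglyMeasurable (ae_of_all _ fun ω => ?_)
      rw [Real.norm_eq_abs, abs_mul, abs_mul]
      have b1 : |X ω i| ≤ ‖X ω‖ := coord_abs_le_norm' _ _
      have b2 : |X ω j| ≤ ‖X ω‖ := coord_abs_le_norm' _ _
      have b3 : |fderiv ℝ (fderiv ℝ h) (V ω) (EuclideanSpace.single i 1)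
          (EuclideanSpace.single j 1)| ≤ M2 := by
        have e1 : ‖EuclideanSpace.single i (1:ℝ)‖ = 1 := by
          rw [EuclideanSpace.norm_single]; simp
        have e2 : ‖EuclideanSpace.single j (1:ℝ)‖ = 1 := by
          rw [EuclideanSpace.norm_single]; simp
        have s1 := (fderiv ℝ (fderiv ℝ h) (V ω) (EuclideanSpace.single i 1)).le_opNorm
          (EuclideanSpace.single j (1:ℝ))
        rw [e2, mul_one] at s1
        have s2 := (fderiv ℝ (fderiv ℝ h) (V ω)).le_opNorm (EuclideanSpace.single i (1:ℝ))
        rw [e1, mul_one] at s2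
        exact s1.trans (s2.trans (hM2' (V ω)))
      have t1 := mul_le_mul b1 b2 (abs_nonneg _) (norm_nonneg _)
      have t2 := mul_le_mul t1 b3 (abs_nonneg _) (by positivity : (0:ℝ) ≤ ‖X ω‖ * ‖X ω‖)
      refine le_trans t2 (le_of_eq (by ring))
    have eexp : (fun ω => fderiv ℝ (fderiv ℝ h) (V ω) (X ω) (X ω)) = fun ω =>
        ∑ i, ∑ j, X ω i * X ω j * fderiv ℝ (fderiv ℝ h) (V ω) (EuclideanSpace.single i 1)
          (EuclideanSpace.single j 1) := funext fun ω => expand _ _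
    rw [eexp, integral_finset_sum _ (fun i _ => integrable_finset_sum _ (fun j _ => intij i j))]
    refine Finset.sum_congr rfl fun i _ => ?_
    rw [integral_finset_sum _ (fun j _ => intij i j)]
    refine Finset.sum_congr rfl fun j _ => ?_
    have indij : IndepFun (fun ω => X ω i * X ω j)
        (fun ω => fderiv ℝ (fderiv ℝ h) (V ω) (EuclideanSpace.single i 1)
          (EuclideanSpace.single j 1)) := by
      have mφ : Measurable (fun x : EuclideanSpace ℝ (Fin k) => x i * x j) :=
        Measurable.mul (EuclideanSpace.proj (𝕜 := ℝ) i).continuous.measurable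
          (EuclideanSpace.proj (𝕜 := ℝ) j).continuous.measurable
      have c0 : Continuous (fun v : EuclideanSpace ℝ (Fin k) => (fderiv ℝ (fderiv ℝ h) v)
          (EuclideanSpace.single i (1:ℝ))) :=
        isBoundedBilinearMap_apply.continuous.comp (hd2c.prodMk continuous_const)
      have mψ : Measurable (fun v : EuclideanSpace ℝ (Fin k) =>
          fderiv ℝ (fderiv ℝ h) v (EuclideanSpace.single i 1) (EuclideanSpace.single j 1)) :=
        (isBoundedBilinearMap_apply.continuous.comp (c0.prodMk continuous_const)).measurable
      exact (hindep.symm).comp mφ mψ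
    exact indij.integral_mul_eq_mul_integral ((mXi i).mul (mXi j)).aestronglyMeasurable
      (mCij i j).aestronglyMeasurable
  -- assembly
  have intA : Integrable (fun ω => h (V ω + X ω) - h (V ω)) := inth1.sub inth2
  have intB : Integrable (fun ω => h (V ω + X ω) - h (V ω) - fderiv ℝ h (V ω) (X ω)) :=
    intA.sub intlin
  have intQhalf : Integrable
      (fun ω => (1/2) * fderiv ℝ (fderiv ℝ h) (V ω) (X ω) (X ω)) := intquad.const_mul (1/2)
  have eT : ∫ ω, (h (V ω + X ω) - h (V ω) - fderiv ℝ h (V ω) (X ω)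
        - (1/2) * fderiv ℝ (fderiv ℝ h) (V ω) (X ω) (X ω))
      = (∫ ω, h (V ω + X ω)) - (∫ ω, h (V ω)) - (∫ ω, fderiv ℝ h (V ω) (X ω))
        - ∫ ω, (1/2) * fderiv ℝ (fderiv ℝ h) (V ω) (X ω) (X ω) := by
    rw [integral_sub intB intQhalf, integral_sub intA intlin, integral_sub inth1 inth2]
  have ehalf : ∫ ω, (1/2) * fderiv ℝ (fderiv ℝ h) (V ω) (X ω) (X ω)
      = (1/2) * ∑ i, ∑ j, (∫ ω, X ω i * X ω j) *
          (∫ ω, fderiv ℝ (fderiv ℝ h) (V ω) (EuclideanSpace.single i 1)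
            (EuclideanSpace.single j 1)) := by
    rw [integral_const_mul, hquadsum]
  rw [eT, ehalf, hlin0]
  ring



/-- Single-summand Lindeberg estimate: if `V` is independent of `(W, W')`, `W` and `W'` are
centered with equal covariances and finite `(2+δ)`-moments, and `h ∈ C³_b(ℝ^k)`, then
`|E[h(V+W) − h(V+W')]| ≤ 6^{−δ}‖h⁽²⁾‖_∞^{1−δ}‖h⁽³⁾‖_∞^δ
  E(‖W‖^{2+δ} + ‖W‖^{2(1−δ)}‖W'‖^{3δ} + ‖W‖^{3δ}‖W'‖^{2(1−δ)} + ‖W'‖^{2+δ})`. -/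
theorem lindeberg_single_summand {k : ℕ} {Ω : Type*} [MeasureSpace Ω]
    [IsProbabilityMeasure (ℙ : Measure Ω)]
    (δ : ℝ) (hδ : δ ∈ Set.Ioc (0 : ℝ) 1)
    (V W W' : Ω → EuclideanSpace ℝ (Fin k))
    (hVm : AEMeasurable V) (hWm : AEMeasurable W) (hW'm : AEMeasurable W')
    (hindep : IndepFun V (fun ω => (W ω, W' ω)))
    (hWcent : ∫ ω, W ω = 0) (hW'cent : ∫ ω, W' ω = 0)
    (hcov : ∀ s t : EuclideanSpace ℝ (Fin k),
      ∫ ω, (inner ℝ s (W ω) : ℝ) * (inner ℝ t (W ω) : ℝ) =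
        ∫ ω, (inner ℝ s (W' ω) : ℝ) * (inner ℝ t (W' ω) : ℝ))
    (hWint : Integrable (fun ω => ‖W ω‖ ^ (2 + δ)))
    (hW'int : Integrable (fun ω => ‖W' ω‖ ^ (2 + δ)))
    (h : EuclideanSpace ℝ (Fin k) → ℝ) (hh : ContDiff ℝ 3 h)
    (hbd0 : ∃ M, ∀ x, |h x| ≤ M)
    (hbd1 : ∃ M, ∀ x, ‖fderiv ℝ h x‖ ≤ M)
    (M2 M3 : ℝ)
    (hM2 : ∀ x, ‖iteratedFDeriv ℝ 2 h x‖ ≤ M2)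
    (hM3 : ∀ x, ‖iteratedFDeriv ℝ 3 h x‖ ≤ M3) :
    |∫ ω, h (V ω + W ω) - ∫ ω, h (V ω + W' ω)| ≤
      (6 : ℝ) ^ (-δ) * M2 ^ (1 - δ) * M3 ^ δ *
        ∫ ω, (‖W ω‖ ^ (2 + δ) + ‖W ω‖ ^ (2 * (1 - δ)) * ‖W' ω‖ ^ (3 * δ) +
          ‖W ω‖ ^ (3 * δ) * ‖W' ω‖ ^ (2 * (1 - δ)) + ‖W' ω‖ ^ (2 + δ)) := by
  obtain ⟨hδ0, hδ1⟩ := hδ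
  obtain ⟨M0, hM0⟩ := hbd0
  obtain ⟨M1, hM1⟩ := hbd1
  have hM2nn : 0 ≤ M2 := (norm_nonneg _).trans (hM2 0)
  have hM3nn : 0 ≤ M3 := (norm_nonneg _).trans (hM3 0)
  set C : ℝ := (6 : ℝ) ^ (-δ) * M2 ^ (1 - δ) * M3 ^ δ with hC
  have hCnn : 0 ≤ C := by
    have c1 : (0:ℝ) ≤ (6:ℝ) ^ (-δ) := Real.rpow_nonneg (by norm_num) _
    have c2 : (0:ℝ) ≤ M2 ^ (1 - δ) := Real.rpow_nonneg hM2nn _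
    have c3 : (0:ℝ) ≤ M3 ^ δ := Real.rpow_nonneg hM3nn _
    positivity
  have hn2 : ∀ z, ‖fderiv ℝ (fderiv ℝ h) z‖ ≤ M2 := by
    intro z
    rw [show ‖fderiv ℝ (fderiv ℝ h) z‖
        = ‖iteratedFDeriv ℝ 0 (fderiv ℝ (fderiv ℝ h)) z‖ from
        (norm_iteratedFDeriv_zero (f := fderiv ℝ (fderiv ℝ h)) (x := z)).symm,
      norm_iteratedFDeriv_fderiv, norm_iteratedFDeriv_fderiv]
    exact hM2 z
  -- independence of V from W and from W'
  have hVW : IndepFun V W := hindep.comp measurable_id measurable_fst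
  have hVW' : IndepFun V W' := hindep.comp measurable_id measurable_snd
  -- integrability package
  have pack : ∀ (X : Ω → EuclideanSpace ℝ (Fin k)), AEMeasurable X →
      Integrable (fun ω => ‖X ω‖ ^ (2+δ)) →
      Integrable X ∧ Integrable (fun ω => ‖X ω‖) ∧ Integrable (fun ω => ‖X ω‖ ^ 2) := by
    intro X hXm hXint
    have hb : Integrable (fun ω => 1 + ‖X ω‖ ^ (2+δ)) := (integrable_const 1).add hXint
    refine ⟨Integrable.mono' hb hXm.aestronglyMeasurable (ae_of_all _ fun ω =>
        le_one_add_rpow' hδ0 (norm_nonneg _)), ?_, ?_⟩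
    · refine Integrable.mono' hb hXm.norm.aestronglyMeasurable (ae_of_all _ fun ω => ?_)
      rw [Real.norm_eq_abs, abs_norm]
      exact le_one_add_rpow' hδ0 (norm_nonneg _)
    · refine Integrable.mono' hb
        (((continuous_pow 2).measurable.comp_aemeasurable hXm.norm).aestronglyMeasurable)
        (ae_of_all _ fun ω => ?_)
      rw [Real.norm_eq_abs, abs_of_nonneg (by positivity : (0:ℝ) ≤ ‖X ω‖ ^ 2)]
      exact sq_le_one_add_rpow' hδ0 (norm_nonneg _)
  obtain ⟨hWv, hWnorm, hWsq⟩ := pack W hWm hWint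
  obtain ⟨hW'v, hW'norm, hW'sq⟩ := pack W' hW'm hW'int
  -- decompositions
  have dW := taylor_integral_decomp V W hVm hWm hVW hWcent hWv hWnorm hWsq h hh
    M0 M1 M2 hM0 hM1 hn2
  have dW' := taylor_integral_decomp V W' hVm hW'm hVW' hW'cent hW'v hW'norm hW'sq h hh
    M0 M1 M2 hM0 hM1 hn2
  -- equal covariances, coordinatewise
  have hcov' : ∀ i j : Fin k, (∫ ω, W ω i * W ω j) = ∫ ω, W' ω i * W' ω j := by
    intro i j
    have hc := hcov (EuclideanSpace.single i 1) (EuclideanSpace.single j 1)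
    simpa [EuclideanSpace.inner_single_left] using hc
  have sumeq : ∑ i, ∑ j, (∫ ω, W ω i * W ω j) *
        (∫ ω, fderiv ℝ (fderiv ℝ h) (V ω) (EuclideanSpace.single i 1)
          (EuclideanSpace.single j 1))
      = ∑ i, ∑ j, (∫ ω, W' ω i * W' ω j) *
        (∫ ω, fderiv ℝ (fderiv ℝ h) (V ω) (EuclideanSpace.single i 1)
          (EuclideanSpace.single j 1)) :=
    Finset.sum_congr rfl fun i _ => Finset.sum_congr rfl fun j _ => by rw [hcov' i j]
  -- key identity
  have keyeq : (∫ ω, h (V ω + W ω)) - (∫ ω, h (V ω + W' ω))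
      = (∫ ω, (h (V ω + W ω) - h (V ω) - fderiv ℝ h (V ω) (W ω)
          - (1/2) * fderiv ℝ (fderiv ℝ h) (V ω) (W ω) (W ω)))
        - (∫ ω, (h (V ω + W' ω) - h (V ω) - fderiv ℝ h (V ω) (W' ω)
          - (1/2) * fderiv ℝ (fderiv ℝ h) (V ω) (W' ω) (W' ω))) := by
    rw [dW, dW', sumeq]
    ring
  -- pointwise bound on the Taylor remainders
  have hTb : ∀ (x w : EuclideanSpace ℝ (Fin k)),
      |h (x + w) - h x - fderiv ℝ h x w - (1/2) * fderiv ℝ (fderiv ℝ h) x w w|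
        ≤ C * ‖w‖ ^ (2+δ) := fun x w =>
    (taylor2_pointwise h hh M2 M3 hM2 hM3 x w).trans
      (min_rpow_bound hδ0 hδ1 hM2nn hM3nn (norm_nonneg w))
  have bW : |∫ ω, (h (V ω + W ω) - h (V ω) - fderiv ℝ h (V ω) (W ω)
      - (1/2) * fderiv ℝ (fderiv ℝ h) (V ω) (W ω) (W ω))| ≤ C * ∫ ω, ‖W ω‖ ^ (2+δ) := by
    rw [← integral_const_mul, ← Real.norm_eq_abs]
    exact norm_integral_le_of_norm_le (hWint.const_mul C)
      (ae_of_all _ fun ω => by rw [Real.norm_eq_abs]; exact hTb (V ω) (W ω))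
  have bW' : |∫ ω, (h (V ω + W' ω) - h (V ω) - fderiv ℝ h (V ω) (W' ω)
      - (1/2) * fderiv ℝ (fderiv ℝ h) (V ω) (W' ω) (W' ω))| ≤ C * ∫ ω, ‖W' ω‖ ^ (2+δ) := by
    rw [← integral_const_mul, ← Real.norm_eq_abs]
    exact norm_integral_le_of_norm_le (hW'int.const_mul C)
      (ae_of_all _ fun ω => by rw [Real.norm_eq_abs]; exact hTb (V ω) (W' ω))
  -- integrability of the cross terms
  have hp1 : (0:ℝ) ≤ 2 * (1 - δ) := by linarith
  have hp2 : (0:ℝ) ≤ 3 * δ := by linarith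
  have hpq : 2 * (1 - δ) + 3 * δ = 2 + δ := by ring
  have crossWW' : ∀ ω, ‖W ω‖ ^ (2 * (1 - δ)) * ‖W' ω‖ ^ (3 * δ)
      ≤ ‖W ω‖ ^ (2+δ) + ‖W' ω‖ ^ (2+δ) := by
    intro ω
    have hc := cross_rpow_le (norm_nonneg (W ω)) (norm_nonneg (W' ω)) hp1 hp2
      (by rw [hpq]; linarith)
    rwa [hpq] at hc
  have crossW'W : ∀ ω, ‖W ω‖ ^ (3 * δ) * ‖W' ω‖ ^ (2 * (1 - δ))
      ≤ ‖W ω‖ ^ (2+δ) + ‖W' ω‖ ^ (2+δ) := by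
    intro ω
    have hpq2 : 3 * δ + 2 * (1 - δ) = 2 + δ := by ring
    have hc := cross_rpow_le (norm_nonneg (W ω)) (norm_nonneg (W' ω)) hp2 hp1
      (by rw [hpq2]; linarith)
    rwa [hpq2] at hc
  have msB : AEStronglyMeasurable (fun ω => ‖W ω‖ ^ (2 * (1 - δ)) * ‖W' ω‖ ^ (3 * δ)) ℙ :=
    (((Real.continuous_rpow_const hp1).measurable.comp_aemeasurable hWm.norm).mul
      ((Real.continuous_rpow_const hp2).measurable.comp_aemeasurable
        hW'm.norm)).aestronglyMeasurable
  have msC : AEStronglyMeasurable (fun ω => ‖W ω‖ ^ (3 * δ) * ‖W' ω‖ ^ (2 * (1 - δ))) ℙ :=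
    (((Real.continuous_rpow_const hp2).measurable.comp_aemeasurable hWm.norm).mul
      ((Real.continuous_rpow_const hp1).measurable.comp_aemeasurable
        hW'm.norm)).aestronglyMeasurable
  have intB : Integrable (fun ω => ‖W ω‖ ^ (2 * (1 - δ)) * ‖W' ω‖ ^ (3 * δ)) := by
    refine Integrable.mono' (hWint.add hW'int) msB (ae_of_all _ fun ω => ?_)
    rw [Real.norm_eq_abs, abs_of_nonneg (by positivity)]
    exact crossWW' ω
  have intC : Integrable (fun ω => ‖W ω‖ ^ (3 * δ) * ‖W' ω‖ ^ (2 * (1 - δ))) := by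
    refine Integrable.mono' (hWint.add hW'int) msC (ae_of_all _ fun ω => ?_)
    rw [Real.norm_eq_abs, abs_of_nonneg (by positivity)]
    exact crossW'W ω
  have intFour : Integrable (fun ω => ‖W ω‖ ^ (2 + δ) + ‖W ω‖ ^ (2 * (1 - δ)) * ‖W' ω‖ ^ (3 * δ) +
      ‖W ω‖ ^ (3 * δ) * ‖W' ω‖ ^ (2 * (1 - δ)) + ‖W' ω‖ ^ (2 + δ)) :=
    ((hWint.add intB).add intC).add hW'int
  have mono2 : (∫ ω, (‖W ω‖ ^ (2+δ) + ‖W' ω‖ ^ (2+δ)))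
      ≤ ∫ ω, (‖W ω‖ ^ (2 + δ) + ‖W ω‖ ^ (2 * (1 - δ)) * ‖W' ω‖ ^ (3 * δ) +
        ‖W ω‖ ^ (3 * δ) * ‖W' ω‖ ^ (2 * (1 - δ)) + ‖W' ω‖ ^ (2 + δ)) := by
    refine integral_mono (hWint.add hW'int) intFour (fun ω => ?_)
    have b1 : (0:ℝ) ≤ ‖W ω‖ ^ (2 * (1 - δ)) * ‖W' ω‖ ^ (3 * δ) := by positivity
    have b2 : (0:ℝ) ≤ ‖W ω‖ ^ (3 * δ) * ‖W' ω‖ ^ (2 * (1 - δ)) := by positivity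
    simp only
    linarith
  have inth1m : Integrable (fun ω => h (V ω + W ω)) := by
    refine Integrable.mono' (integrable_const M0)
      ((hh.continuous.measurable.comp_aemeasurable (hVm.add hWm)).aestronglyMeasurable)
      (ae_of_all _ fun ω => ?_)
    simpa [Real.norm_eq_abs] using hM0 (V ω + W ω)
  have estep : (∫ ω, (h (V ω + W ω) - ∫ ω, h (V ω + W' ω)))
      = (∫ ω, h (V ω + W ω)) - ∫ ω, h (V ω + W' ω) := by
    rw [integral_sub inth1m (integrable_const _), integral_const]
    simp
  rw [show |∫ ω, h (V ω + W ω) - ∫ ω, h (V ω + W' ω)|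
      = |(∫ ω, h (V ω + W ω)) - ∫ ω, h (V ω + W' ω)| from by rw [estep]]
  calc |(∫ ω, h (V ω + W ω)) - ∫ ω, h (V ω + W' ω)|
      = |(∫ ω, (h (V ω + W ω) - h (V ω) - fderiv ℝ h (V ω) (W ω)
          - (1/2) * fderiv ℝ (fderiv ℝ h) (V ω) (W ω) (W ω)))
        - (∫ ω, (h (V ω + W' ω) - h (V ω) - fderiv ℝ h (V ω) (W' ω)
          - (1/2) * fderiv ℝ (fderiv ℝ h) (V ω) (W' ω) (W' ω)))| := by rw [keyeq]
    _ ≤ |(∫ ω, (h (V ω + W ω) - h (V ω) - fderiv ℝ h (V ω) (W ω)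
          - (1/2) * fderiv ℝ (fderiv ℝ h) (V ω) (W ω) (W ω)))|
        + |(∫ ω, (h (V ω + W' ω) - h (V ω) - fderiv ℝ h (V ω) (W' ω)
          - (1/2) * fderiv ℝ (fderiv ℝ h) (V ω) (W' ω) (W' ω)))| := abs_sub _ _
    _ ≤ C * (∫ ω, ‖W ω‖ ^ (2+δ)) + C * ∫ ω, ‖W' ω‖ ^ (2+δ) := add_le_add bW bW'
    _ = C * ∫ ω, (‖W ω‖ ^ (2+δ) + ‖W' ω‖ ^ (2+δ)) := by
        rw [integral_add hWint hW'int]; ring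
    _ ≤ C * ∫ ω, (‖W ω‖ ^ (2 + δ) + ‖W ω‖ ^ (2 * (1 - δ)) * ‖W' ω‖ ^ (3 * δ) +
          ‖W ω‖ ^ (3 * δ) * ‖W' ω‖ ^ (2 * (1 - δ)) + ‖W' ω‖ ^ (2 + δ)) :=
        mul_le_mul_of_nonneg_left mono2 hCnn
end
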